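/- arXiv:1706.06934 — 10 statements merged into one kernel-verified Lean document; each statement's English description precedes it below -/
import Mathlib

section
/- Let 1 ≤ d ≤ n be integers and let s⁽¹⁾,…,s⁽ᵐ⁾ be independent, uniformly distributed elements of {0,1}ⁿ. Then the probability that the set S = {s⁽¹⁾,…,s⁽ᵐ⁾} is not an (n,d)-universal set is at most C(n,d)·2^d·(1 − 2^{−d})^m. In particular, for every δ ∈ (0,1), if m ≥ 2^d·(d·ln(2n) + ln(1/δ)) then S is an (n,d)-universal set with probability at least 1 − δ. -/
open MeasureTheory
open scoped ENNReal

def IsUniversalSet (n d : ℕ) (S : Set (Fin n → Bool)) : Prop :=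
  ∀ idx : Fin d → Fin n, StrictMono idx →
    ∀ σ : Fin d → Bool, ∃ s ∈ S, ∀ j : Fin d, s (idx j) = σ j

open Classical in
private lemma card_pattern {n d : ℕ} {idx : Fin d → Fin n} (hinj : Function.Injective idx)
    (σ : Fin d → Bool) :
    Nat.card {t : Fin n → Bool // ∀ j, t (idx j) = σ j} = 2 ^ (n - d) := by
  have e : {t : Fin n → Bool // ∀ j, t (idx j) = σ j} ≃
      ({i : Fin n // ¬ ∃ j, idx j = i} → Bool) :=
  { toFun := fun t i => t.1 i.1
    invFun := fun u => ⟨fun i => if h : ∃ j, idx j = i then σ h.choose else u ⟨i, h⟩, by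
      intro j
      have h : ∃ j', idx j' = idx j := ⟨j, rfl⟩
      simp only [dif_pos h]
      congr 1
      exact hinj h.choose_spec⟩
    left_inv := fun t => by
      apply Subtype.ext
      funext i
      by_cases h : ∃ j, idx j = i
      · simp only [dif_pos h]
        rw [← t.2 h.choose, h.choose_spec]
      · simp only [dif_neg h]
    right_inv := fun u => by
      funext i
      simp only [dif_neg i.2] }
  rw [Nat.card_congr e, Nat.card_eq_fintype_card, Fintype.card_fun, Fintype.card_bool]
  congr 1
  have h1 : Fintype.card {i : Fin n // ∃ j, idx j = i} = d := by
    have : Nat.card {i : Fin n // ∃ j, idx j = i} = d := by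
      have : Nat.card (Set.range idx) = d := by
        rw [Nat.card_range_of_injective hinj, Nat.card_eq_fintype_card, Fintype.card_fin]
      exact this
    rw [← Nat.card_eq_fintype_card, this]
  rw [Fintype.card_subtype_compl, h1, Fintype.card_fin]

private lemma measure_pattern {n d : ℕ} (hdn : d ≤ n) {idx : Fin d → Fin n}
    (hinj : Function.Injective idx) (σ : Fin d → Bool) :
    (PMF.uniformOfFintype (Fin n → Bool)).toMeasure {t | ∀ j, t (idx j) = σ j}
      = ((2 : ℝ≥0∞) ^ d)⁻¹ := by
  classical
  rw [PMF.toMeasure_uniformOfFintype_apply _ MeasurableSet.of_discrete]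
  rw [Fintype.card_eq_nat_card, Fintype.card_eq_nat_card]
  have h1 : Nat.card {t : Fin n → Bool | ∀ j, t (idx j) = σ j} = 2 ^ (n - d) :=
    card_pattern hinj σ
  have h2 : Nat.card (Fin n → Bool) = 2 ^ n := by
    rw [Nat.card_eq_fintype_card, Fintype.card_fun, Fintype.card_bool, Fintype.card_fin]
  rw [h1, h2]
  have h3 : (2 : ℝ≥0∞) ^ n = 2 ^ (n - d) * 2 ^ d := by
    rw [← pow_add, Nat.sub_add_cancel hdn]
  push_cast
  rw [h3, div_eq_mul_inv,
    ENNReal.mul_inv (Or.inl (by positivity)) (Or.inl (by simp)),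
    ← mul_assoc, ENNReal.mul_inv_cancel (by positivity) (by simp), one_mul]

/-- For `1 ≤ d ≤ n` and `s⁽¹⁾,…,s⁽ᵐ⁾` independent uniform elements of
`{0,1}ⁿ` (i.e. drawn from the product of `m` copies of the uniform measure on `{0,1}ⁿ`),
the probability that `S = {s⁽¹⁾,…,s⁽ᵐ⁾}` is not an `(n,d)`-universal set is at most
`C(n,d)·2^d·(1 − 2^{−d})^m`.  In particular, for every `δ ∈ (0,1)`, if
`m ≥ 2^d·(d·ln(2n) + ln(1/δ))` then `S` is `(n,d)`-universal with probability `≥ 1 − δ`. -/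
theorem stmt_0 (n d m : ℕ) (hd : 1 ≤ d) (hdn : d ≤ n) :
    (Measure.pi fun _ : Fin m => (PMF.uniformOfFintype (Fin n → Bool)).toMeasure)
        {s : Fin m → Fin n → Bool | ¬ IsUniversalSet n d (Set.range s)} ≤
      (n.choose d : ℝ≥0∞) * 2 ^ d * (1 - ((2 : ℝ≥0∞) ^ d)⁻¹) ^ m ∧
    ∀ δ : ℝ, 0 < δ → δ < 1 →
      (2 : ℝ) ^ d * (d * Real.log (2 * n) + Real.log (1 / δ)) ≤ (m : ℝ) →
      ENNReal.ofReal (1 - δ) ≤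
        (Measure.pi fun _ : Fin m => (PMF.uniformOfFintype (Fin n → Bool)).toMeasure)
          {s : Fin m → Fin n → Bool | IsUniversalSet n d (Set.range s)} := by
  classical
  set μ0 := (PMF.uniformOfFintype (Fin n → Bool)).toMeasure with hμ0
  set μ := Measure.pi fun _ : Fin m => μ0 with hμ
  set q : ℝ≥0∞ := ((2 : ℝ≥0∞) ^ d)⁻¹ with hqdef
  -- measure of each bad event
  have hE : ∀ (idx : Fin d → Fin n), Function.Injective idx → ∀ σ : Fin d → Bool,
      μ {s : Fin m → Fin n → Bool | ∀ i, ¬ ∀ j, s i (idx j) = σ j} = (1 - q) ^ m := by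
    intro idx hinj σ
    have hset : {s : Fin m → Fin n → Bool | ∀ i, ¬ ∀ j, s i (idx j) = σ j}
        = Set.pi Set.univ
            (fun _ : Fin m => {t : Fin n → Bool | ∀ j, t (idx j) = σ j}ᶜ) := by
      ext s
      simp [Set.mem_pi]
    have hc : μ0 {t : Fin n → Bool | ∀ j, t (idx j) = σ j}ᶜ = 1 - q := by
      rw [measure_compl MeasurableSet.of_discrete (measure_ne_top _ _), measure_univ,
        hμ0, measure_pattern hdn hinj σ]
    rw [hset, Measure.pi_pi]
    simp [hc]
  -- the finset of strictly monotone index maps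
  set F : Finset (Fin d → Fin n) := Finset.univ.filter StrictMono with hF
  have hFcard : F.card = n.choose d := by
    have e : {f : Fin d → Fin n // StrictMono f} ≃ {A : Finset (Fin n) // A.card = d} :=
    { toFun := fun f => ⟨Finset.univ.image f.1, by
        rw [Finset.card_image_of_injective _ f.2.injective, Finset.card_univ,
          Fintype.card_fin]⟩
      invFun := fun A => ⟨A.1.orderEmbOfFin A.2, (A.1.orderEmbOfFin A.2).strictMono⟩
      left_inv := fun f => by
        apply Subtype.ext
        exact (Finset.orderEmbOfFin_unique _ (fun x => Finset.mem_image_of_mem _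
          (Finset.mem_univ x)) f.2).symm
      right_inv := fun A => by
        apply Subtype.ext
        apply Finset.coe_injective
        rw [Finset.coe_image, Finset.coe_univ, Set.image_univ,
          Finset.range_orderEmbOfFin] }
    calc F.card = Fintype.card {f : Fin d → Fin n // StrictMono f} :=
          (Fintype.card_subtype _).symm
      _ = Fintype.card {A : Finset (Fin n) // A.card = d} := Fintype.card_congr e
      _ = (Finset.univ.filter (fun A : Finset (Fin n) => A.card = d)).card :=
          Fintype.card_subtype _
      _ = (Finset.powersetCard d (Finset.univ : Finset (Fin n))).card := by
          congr 1
          ext A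
          simp [Finset.mem_powersetCard_univ]
      _ = n.choose d := by
          rw [Finset.card_powersetCard, Finset.card_univ, Fintype.card_fin]
  -- union bound
  have hsub : {s : Fin m → Fin n → Bool | ¬ IsUniversalSet n d (Set.range s)}
      ⊆ ⋃ idx ∈ F, ⋃ σ ∈ (Finset.univ : Finset (Fin d → Bool)),
          {s : Fin m → Fin n → Bool | ∀ i, ¬ ∀ j, s i (idx j) = σ j} := by
    intro s hs
    simp only [Set.mem_setOf_eq, IsUniversalSet, not_forall] at hs
    obtain ⟨idx, hmono, σ, hσ⟩ := hs
    push_neg at hσ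
    refine Set.mem_iUnion₂.2 ⟨idx, Finset.mem_filter.2 ⟨Finset.mem_univ _, hmono⟩,
      Set.mem_iUnion₂.2 ⟨σ, Finset.mem_univ _, ?_⟩⟩
    intro i hall
    obtain ⟨j, hj⟩ := hσ (s i) ⟨i, rfl⟩
    exact hj (hall j)
  have part1 : μ {s : Fin m → Fin n → Bool | ¬ IsUniversalSet n d (Set.range s)} ≤
      (n.choose d : ℝ≥0∞) * 2 ^ d * (1 - q) ^ m := by
    calc μ {s : Fin m → Fin n → Bool | ¬ IsUniversalSet n d (Set.range s)}
        ≤ μ (⋃ idx ∈ F, ⋃ σ ∈ (Finset.univ : Finset (Fin d → Bool)),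
            {s : Fin m → Fin n → Bool | ∀ i, ¬ ∀ j, s i (idx j) = σ j}) :=
          measure_mono hsub
      _ ≤ ∑ idx ∈ F, μ (⋃ σ ∈ (Finset.univ : Finset (Fin d → Bool)),
            {s : Fin m → Fin n → Bool | ∀ i, ¬ ∀ j, s i (idx j) = σ j}) :=
          measure_biUnion_finset_le _ _
      _ ≤ ∑ idx ∈ F, ∑ σ ∈ (Finset.univ : Finset (Fin d → Bool)),
            μ {s : Fin m → Fin n → Bool | ∀ i, ¬ ∀ j, s i (idx j) = σ j} :=
          Finset.sum_le_sum fun idx _ => measure_biUnion_finset_le _ _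
      _ = ∑ idx ∈ F, ∑ _σ ∈ (Finset.univ : Finset (Fin d → Bool)), (1 - q) ^ m := by
          refine Finset.sum_congr rfl fun idx hidx => Finset.sum_congr rfl fun σ _ => ?_
          exact hE idx ((Finset.mem_filter.1 hidx).2.injective) σ
      _ = (F.card : ℝ≥0∞) * ((2 : ℝ≥0∞) ^ d * (1 - q) ^ m) := by
          simp [Finset.sum_const, Finset.card_univ, Fintype.card_fun, mul_assoc,
            mul_comm, mul_left_comm]
      _ = (n.choose d : ℝ≥0∞) * 2 ^ d * (1 - q) ^ m := by
          rw [hFcard, mul_assoc]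
  refine ⟨part1, ?_⟩
  intro δ hδ0 hδ1 hm
  have hn1 : (1:ℝ) ≤ (n:ℝ) := by exact_mod_cast le_trans hd hdn
  have h2n : (0:ℝ) < 2 * n := by linarith
  set qr : ℝ := ((2:ℝ)^d)⁻¹ with hqr
  have hqr0 : 0 < qr := by positivity
  have hqr1 : qr ≤ 1 := by
    rw [hqr]
    exact inv_le_one_of_one_le₀ (one_le_pow₀ (by norm_num))
  have hkey : (n.choose d : ℝ) * 2^d * (1 - qr)^m ≤ δ := by
    have h1 : (n.choose d : ℝ) ≤ (n:ℝ)^d := by exact_mod_cast Nat.choose_le_pow n d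
    have h2 : (1 - qr)^m ≤ Real.exp (-(qr * m)) := by
      have hle : 1 - qr ≤ Real.exp (-qr) := by
        have := Real.add_one_le_exp (-qr); linarith
      calc (1-qr)^m ≤ (Real.exp (-qr))^m := pow_le_pow_left₀ (by linarith) hle m
        _ = Real.exp (-(qr * m)) := by rw [← Real.exp_nat_mul]; ring_nf
    have h3 : d * Real.log (2*n) + Real.log (1/δ) ≤ qr * m := by
      rw [hqr, inv_mul_eq_div, le_div_iff₀ (by positivity)]
      nlinarith [hm]
    have hnn : (0:ℝ) ≤ 1 - qr := by linarith
    calc (n.choose d : ℝ) * 2^d * (1-qr)^m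
        ≤ (n:ℝ)^d * 2^d * Real.exp (-(qr*m)) := by
          apply mul_le_mul (mul_le_mul_of_nonneg_right h1 (by positivity)) h2
            (by positivity) (by positivity)
      _ = (2*(n:ℝ))^d * Real.exp (-(qr*m)) := by rw [mul_pow]; ring
      _ ≤ (2*(n:ℝ))^d * Real.exp (-(d * Real.log (2*n) + Real.log (1/δ))) := by
          have := Real.exp_le_exp.2 (neg_le_neg h3)
          exact mul_le_mul_of_nonneg_left this (by positivity)
      _ = δ := by
          have e1 : Real.exp ((d:ℝ) * Real.log (2*n)) = (2*(n:ℝ))^d := by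
            rw [Real.exp_nat_mul, Real.exp_log h2n]
          rw [neg_add, Real.exp_add, Real.exp_neg, e1, Real.exp_neg,
            Real.exp_log (by positivity : (0:ℝ) < 1/δ)]
          have : (2*(n:ℝ))^d ≠ 0 := by positivity
          field_simp
  have hqconv : (1 - q : ℝ≥0∞) = ENNReal.ofReal (1 - qr) := by
    rw [hqr, hqdef, ENNReal.ofReal_sub _ (by positivity), ENNReal.ofReal_one,
      ENNReal.ofReal_inv_of_pos (by positivity), ENNReal.ofReal_pow (by norm_num),
      ENNReal.ofReal_ofNat]
  have hnn : (0:ℝ) ≤ 1 - qr := by linarith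
  have hconv : (n.choose d : ℝ≥0∞) * 2 ^ d * (1 - q) ^ m ≤ ENNReal.ofReal δ := by
    have heq : (n.choose d : ℝ≥0∞) * 2^d * (1-q)^m
        = ENNReal.ofReal ((n.choose d : ℝ) * 2^d * (1-qr)^m) := by
      rw [ENNReal.ofReal_mul (by positivity), ENNReal.ofReal_mul (by positivity),
        ENNReal.ofReal_pow hnn, ← hqconv, ENNReal.ofReal_natCast,
        ENNReal.ofReal_pow (by norm_num), ENNReal.ofReal_ofNat]
    rw [heq]
    exact ENNReal.ofReal_le_ofReal hkey
  have hset : {s : Fin m → Fin n → Bool | IsUniversalSet n d (Set.range s)}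
      = {s : Fin m → Fin n → Bool | ¬ IsUniversalSet n d (Set.range s)}ᶜ := by
    ext s; simp
  rw [hset, measure_compl MeasurableSet.of_discrete (measure_ne_top _ _), measure_univ]
  calc ENNReal.ofReal (1 - δ) = 1 - ENNReal.ofReal δ := by
        rw [ENNReal.ofReal_sub _ hδ0.le, ENNReal.ofReal_one]
    _ ≤ 1 - μ {s : Fin m → Fin n → Bool | ¬ IsUniversalSet n d (Set.range s)} :=
        tsub_le_tsub_left (le_trans part1 hconv) 1
end

section
/- For all integers 1 ≤ d ≤ n there exists an (n,d)-universal set S ⊆ {0,1}ⁿ with |S| ≤ ⌈2^d·(d·ln(2n) + 1)⌉. -/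
open Finset

private lemma key_ineq (n d t : ℕ) (hd : 1 ≤ d) (hn : 1 ≤ n) (hdn : d ≤ n)
    (htt : (2:ℝ)^d * (d * Real.log (2*n) + 1) ≤ t) :
    ((n:ℝ)^d * 2^d) * ((2:ℝ)^n - 2^(n-d))^t < ((2:ℝ)^n)^t := by
  have hn1 : (1:ℝ) ≤ n := by exact_mod_cast hn
  have h2n : (0:ℝ) < 2*n := by linarith
  set x : ℝ := ((2:ℝ)^d)⁻¹ with hxdef
  have hp : (0:ℝ) < 2^d := by positivity
  have hx0 : 0 < x := by positivity
  have h1le : (1:ℝ) ≤ 2^d := one_le_pow₀ (by norm_num)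
  have hx1 : x ≤ 1 := by
    rw [hxdef]
    exact inv_le_one_of_one_le₀ h1le
  have hsub : (2:ℝ)^(n-d) = 2^n * x := by
    rw [hxdef, eq_mul_inv_iff_mul_eq₀ hp.ne', ← pow_add, Nat.sub_add_cancel hdn]
  have hfactor : (2:ℝ)^n - 2^(n-d) = 2^n * (1 - x) := by rw [hsub]; ring
  rw [hfactor, mul_pow]
  have hpow : (0:ℝ) < ((2:ℝ)^n)^t := by positivity
  have h1x : 0 ≤ 1 - x := by linarith
  have hexp : (1 - x) ≤ Real.exp (-x) := by
    have := Real.add_one_le_exp (-x); linarith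
  have hpt : (1-x)^t ≤ Real.exp (-x)^t := pow_le_pow_left₀ h1x hexp t
  have h2dx : (2:ℝ)^d * x = 1 := mul_inv_cancel₀ hp.ne'
  have hxt : (d:ℝ) * Real.log (2*n) + 1 ≤ t * x := by
    have h := mul_le_mul_of_nonneg_right htt hx0.le
    have h2 : (2:ℝ)^d * ((d:ℝ) * Real.log (2*n) + 1) * x = (d:ℝ) * Real.log (2*n) + 1 := by
      rw [mul_comm ((2:ℝ)^d) _, mul_assoc, h2dx, mul_one]
    linarith
  have hexp2 : Real.exp (-x)^t = Real.exp (-((t:ℝ)*x)) := by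
    rw [← Real.exp_nat_mul]; congr 1; ring
  have hmono : Real.exp (-((t:ℝ)*x)) ≤ Real.exp (-((d:ℝ)*Real.log (2*n) + 1)) :=
    Real.exp_le_exp.mpr (by linarith)
  have hval : Real.exp ((d:ℝ) * Real.log (2*n)) = (2*(n:ℝ))^d := by
    rw [Real.exp_nat_mul, Real.exp_log h2n]
  have hposn : (0:ℝ) < (2*(n:ℝ))^d := by positivity
  have e1 : Real.exp (-((d:ℝ)*Real.log (2*n) + 1)) = ((2*(n:ℝ))^d)⁻¹ * Real.exp (-1) := by
    rw [neg_add, Real.exp_add, Real.exp_neg, hval]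
  have hE : Real.exp (-1) < 1 := by
    rw [Real.exp_lt_one_iff]; norm_num
  have hfin : (2*(n:ℝ))^d * (1-x)^t < 1 := by
    calc (2*(n:ℝ))^d * (1-x)^t
        ≤ (2*(n:ℝ))^d * (((2*(n:ℝ))^d)⁻¹ * Real.exp (-1)) := by
          apply mul_le_mul_of_nonneg_left _ hposn.le
          calc (1-x)^t ≤ Real.exp (-x)^t := hpt
            _ = Real.exp (-((t:ℝ)*x)) := hexp2
            _ ≤ Real.exp (-((d:ℝ)*Real.log (2*n) + 1)) := hmono
            _ = ((2*(n:ℝ))^d)⁻¹ * Real.exp (-1) := e1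
      _ = Real.exp (-1) := by field_simp
      _ < 1 := hE
  have hnd : (n:ℝ)^d * 2^d = (2*(n:ℝ))^d := by rw [mul_pow]; ring
  have hmul := mul_lt_mul_of_pos_right hfin hpow
  rw [one_mul] at hmul
  nlinarith [hmul]

private lemma good_card (n d : ℕ) (idx : Fin d → Fin n)
    (hinj : Function.Injective idx) (σ : Fin d → Bool) :
    2^(n-d) ≤ (Finset.univ.filter (fun s : Fin n → Bool => ∀ j, s (idx j) = σ j)).card := by
  classical
  have hcr : Fintype.card {i : Fin n // ∃ j, idx j = i} = d := by
    have h1 : Fintype.card {i : Fin n // ∃ j, idx j = i} = Fintype.card (Set.range idx) :=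
      Fintype.card_congr (Equiv.subtypeEquivRight fun i => Iff.rfl)
    rw [h1, Set.card_range_of_injective hinj, Fintype.card_fin]
  have hcc : Fintype.card {i : Fin n // ¬ ∃ j, idx j = i} = n - d := by
    rw [Fintype.card_subtype_compl, hcr, Fintype.card_fin]
  have hΨprop : ∀ (g : {i : Fin n // ¬ ∃ j, idx j = i} → Bool) (j : Fin d),
      (fun i => if h : ∃ j', idx j' = i then σ h.choose else g ⟨i, h⟩) (idx j) = σ j := by
    intro g j
    have h : ∃ j', idx j' = idx j := ⟨j, rfl⟩
    simp only [dif_pos h]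
    congr 1
    exact hinj h.choose_spec
  have hΨinj : Function.Injective
      (fun (g : {i : Fin n // ¬ ∃ j, idx j = i} → Bool) =>
        (⟨fun i => if h : ∃ j', idx j' = i then σ h.choose else g ⟨i, h⟩, hΨprop g⟩ :
          {s : Fin n → Bool // ∀ j, s (idx j) = σ j})) := by
    intro g g' h
    funext ⟨i, hi⟩
    have h2 := congrFun (congrArg Subtype.val h) i
    simpa [dif_neg hi] using h2
  have hle := Fintype.card_le_of_injective _ hΨinj
  calc 2^(n-d) = Fintype.card ({i : Fin n // ¬ ∃ j, idx j = i} → Bool) := by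
        rw [Fintype.card_fun, hcc, Fintype.card_bool]
    _ ≤ Fintype.card {s : Fin n → Bool // ∀ j, s (idx j) = σ j} := hle
    _ = (Finset.univ.filter (fun s : Fin n → Bool => ∀ j, s (idx j) = σ j)).card := by
        rw [Fintype.card_subtype]

/-- For all integers `1 ≤ d ≤ n` there exists an `(n,d)`-universal set
`S ⊆ {0,1}ⁿ` with `|S| ≤ ⌈2^d·(d·ln(2n) + 1)⌉`. -/
theorem stmt_1 (n d : ℕ) (hd : 1 ≤ d) (hdn : d ≤ n) :
    ∃ S : Finset (Fin n → Bool), IsUniversalSet n d ↑S ∧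
      S.card ≤ ⌈(2 : ℝ) ^ d * (d * Real.log (2 * n) + 1)⌉₊ := by
  classical
  have hn : 1 ≤ n := hd.trans hdn
  set t := ⌈(2 : ℝ) ^ d * (↑d * Real.log (2 * ↑n) + 1)⌉₊ with htdef
  by_cases hgood : ∃ f : Fin t → (Fin n → Bool),
      ∀ idx : Fin d → Fin n, StrictMono idx → ∀ σ : Fin d → Bool, ∃ i, ∀ j, f i (idx j) = σ j
  · obtain ⟨f, hf⟩ := hgood
    refine ⟨Finset.image f Finset.univ, ?_, ?_⟩
    · intro idx hidx σ
      obtain ⟨i, hi⟩ := hf idx hidx σ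
      exact ⟨f i, by simp, hi⟩
    · calc (Finset.image f Finset.univ).card ≤ (Finset.univ : Finset (Fin t)).card :=
            Finset.card_image_le
        _ = t := by simp
  · exfalso
    push_neg at hgood
    set C := {p : (Fin d → Fin n) × (Fin d → Bool) // StrictMono p.1} with hC
    set bad : C → Finset (Fin n → Bool) :=
      fun c => Finset.univ.filter (fun s => ¬ ∀ j, s (c.1.1 j) = c.1.2 j) with hbad
    set badT : C → Finset (Fin t → Fin n → Bool) :=
      fun c => Fintype.piFinset (fun _ => bad c) with hbadT
    have hsubset : (Finset.univ : Finset (Fin t → Fin n → Bool)) ⊆ Finset.univ.biUnion badT := by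
      intro f _
      obtain ⟨idx, hmono, σ, hσ⟩ := hgood f
      refine Finset.mem_biUnion.mpr ⟨⟨(idx, σ), hmono⟩, Finset.mem_univ _, ?_⟩
      refine Fintype.mem_piFinset.mpr fun i => ?_
      simp only [hbad, Finset.mem_filter, Finset.mem_univ, true_and]
      obtain ⟨j, hj⟩ := hσ i
      exact fun h => hj (h j)
    have hbadcard : ∀ c, (bad c).card ≤ 2^n - 2^(n-d) := by
      intro c
      have hgc := good_card n d c.1.1 c.2.injective c.1.2
      have hsum := Finset.card_filter_add_card_filter_not
        (p := fun s : Fin n → Bool => ∀ j, s (c.1.1 j) = c.1.2 j) (s := Finset.univ)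
      have htot : (Finset.univ : Finset (Fin n → Bool)).card = 2^n := by simp
      rw [htot] at hsum
      have h1 : (bad c).card
          = 2^n - (Finset.univ.filter (fun s : Fin n → Bool => ∀ j, s (c.1.1 j) = c.1.2 j)).card := by
        rw [hbad]
        convert (Nat.eq_sub_of_add_eq' hsum) using 2
      rw [h1]
      exact Nat.sub_le_sub_left hgc _
    have hcount : (2^n)^t ≤ n^d * 2^d * (2^n - 2^(n-d))^t := by
      calc (2^n)^t = (Finset.univ : Finset (Fin t → Fin n → Bool)).card := by
            simp [Fintype.card_fun]
        _ ≤ ((Finset.univ : Finset C).biUnion badT).card := Finset.card_le_card hsubset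
        _ ≤ ∑ c : C, (badT c).card := Finset.card_biUnion_le
        _ ≤ ∑ _c : C, (2^n - 2^(n-d))^t := Finset.sum_le_sum (fun c _ => by
              simp only [hbadT, Fintype.card_piFinset, Finset.prod_const, Finset.card_univ,
                Fintype.card_fin]
              exact Nat.pow_le_pow_left (hbadcard c) t)
        _ = Fintype.card C * (2^n - 2^(n-d))^t := by
              rw [Finset.sum_const, smul_eq_mul, Finset.card_univ]
        _ ≤ (n^d * 2^d) * (2^n - 2^(n-d))^t := by
              apply Nat.mul_le_mul_right
              calc Fintype.card C ≤ Fintype.card ((Fin d → Fin n) × (Fin d → Bool)) :=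
                    Fintype.card_subtype_le _
                _ = n^d * 2^d := by simp [Fintype.card_fun]
    have hkey := key_ineq n d t hd hn hdn (Nat.le_ceil _)
    have h1 : (2:ℕ)^(n-d) ≤ 2^n := Nat.pow_le_pow_right (by norm_num) (Nat.sub_le n d)
    have hcast := (Nat.cast_le (α := ℝ)).mpr hcount
    push_cast [Nat.cast_sub h1] at hcast
    linarith
end

section
/- Let d ≥ 1 be an integer and let f : {0,1}ⁿ → {0,1} have at most d relevant variables. Let a ∈ {0,1}ⁿ be an assignment, let j be an index such that x_j is sensitive in f with respect to a, and let i be an index such that x_i is irrelevant in f. Let b ∈ {0,1}ⁿ be random with independent coordinates, each equal to 1 with probability 1/(3d). Then Pr[f(a ⊕ b) = f(a) and b_i = 1] ≥ 1/(5d), and Pr[f(a ⊕ b) = f(a) and b_j = 1] ≤ 1/(10d), where a ⊕ b denotes coordinatewise XOR. -/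
open MeasureTheory
open scoped ENNReal

/-- The variable `x_i` is relevant in the boolean function `f` if flipping the `i`-th
coordinate of some assignment changes the value of `f`. -/
def IsRelevant {n : ℕ} (f : (Fin n → Bool) → Bool) (i : Fin n) : Prop :=
  ∃ a : Fin n → Bool, f (Function.update a i false) ≠ f (Function.update a i true)

/-- The variable `x_i` is sensitive in `f` with respect to the assignment `a`. -/
def IsSensitive {n : ℕ} (f : (Fin n → Bool) → Bool) (a : Fin n → Bool) (i : Fin n) : Prop :=
  f (Function.update a i false) ≠ f (Function.update a i true)

/-- The product measure on `{0,1}ⁿ` in which each coordinate is independently `true`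
with probability `1/(3d)`. -/
noncomputable def bernoulliPi (n d : ℕ) : Measure (Fin n → Bool) :=
  Measure.pi fun _ : Fin n =>
    (3 * (d : ℝ≥0∞))⁻¹ • Measure.dirac true + (1 - (3 * (d : ℝ≥0∞))⁻¹) • Measure.dirac false

noncomputable def bern (d : ℕ) : Measure Bool :=
  (3 * (d : ℝ≥0∞))⁻¹ • Measure.dirac true + (1 - (3 * (d : ℝ≥0∞))⁻¹) • Measure.dirac false

lemma bern_true (d : ℕ) : bern d {true} = (3 * (d : ℝ≥0∞))⁻¹ := by
  simp [bern, Measure.dirac_apply]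

lemma bern_false (d : ℕ) : bern d {false} = 1 - (3 * (d : ℝ≥0∞))⁻¹ := by
  simp [bern, Measure.dirac_apply]

lemma p_le_one {d : ℕ} (hd : 1 ≤ d) : (3 * (d : ℝ≥0∞))⁻¹ ≤ 1 := by
  rw [ENNReal.inv_le_one]
  calc (1:ℝ≥0∞) ≤ 3 * 1 := by norm_num
  _ ≤ 3 * (d : ℝ≥0∞) := by
      gcongr
      exact_mod_cast hd

lemma bern_univ {d : ℕ} (hd : 1 ≤ d) : bern d Set.univ = 1 := by
  have h := p_le_one hd
  simp only [bern, Measure.add_apply, Measure.smul_apply, Measure.dirac_apply,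
    Set.indicator_univ, smul_eq_mul, Pi.one_apply, mul_one]
  exact add_tsub_cancel_of_le h

lemma bern_prob {d : ℕ} (hd : 1 ≤ d) : IsProbabilityMeasure (bern d) := ⟨bern_univ hd⟩

lemma bern_univ2 {d : ℕ} (hd : 1 ≤ d) : bern d {false, true} = 1 := by
  rw [show ({false, true} : Set Bool) = Set.univ by ext b; cases b <;> simp]
  exact bern_univ hd

lemma update_irrel {n : ℕ} {f : (Fin n → Bool) → Bool} {k : Fin n} (hk : ¬ IsRelevant f k)
    (b : Fin n → Bool) (x : Bool) : f (Function.update b k x) = f b := by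
  rw [IsRelevant] at hk; push_neg at hk
  have h := hk b
  have hy : ∀ y, f (Function.update b k y) = f (Function.update b k false) := by
    intro y; cases y
    · rfl
    · exact h.symm
  calc f (Function.update b k x) = f (Function.update b k false) := hy x
    _ = f (Function.update b k (b k)) := (hy (b k)).symm
    _ = f b := by rw [Function.update_eq_self]

lemma eq_of_agree_irrel {n : ℕ} (f : (Fin n → Bool) → Bool) (s : Finset (Fin n)) :
    ∀ (b b' : Fin n → Bool), (∀ k, b k ≠ b' k → k ∈ s ∧ ¬ IsRelevant f k) → f b = f b' := by
  classical
  induction s using Finset.induction_on with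
  | empty =>
    intro b b' h
    congr 1; funext k; by_contra hk
    exact absurd (h k hk).1 (Finset.notMem_empty _)
  | @insert k s hks ih =>
    intro b b' h
    set b'' := Function.update b k (b' k) with hb''
    have h1 : f b = f b'' := by
      by_cases hbk : b k = b' k
      · rw [hb'', ← hbk, Function.update_eq_self]
      · exact (update_irrel (h k hbk).2 b (b' k)).symm
    rw [h1]
    apply ih
    intro m hm
    have hmk : m ≠ k := by
      intro he; subst he
      exact hm (Function.update_self m (b' m) b)
    have hbm : b m ≠ b' m := by rwa [hb'', Function.update_of_ne hmk] at hm
    obtain ⟨h2, h3⟩ := h m hbm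
    exact ⟨(Finset.mem_insert.mp h2).resolve_left hmk, h3⟩


/-- Let `f` be a boolean function with at most `d` relevant variables,
`a` an assignment, `x_j` sensitive in `f` w.r.t. `a`, and `x_i` irrelevant in `f`.
If `b` is random with independent coordinates each equal to `1` with probability
`1/(3d)`, then `Pr[f(a ⊕ b) = f(a) ∧ b_i = 1] ≥ 1/(5d)` and
`Pr[f(a ⊕ b) = f(a) ∧ b_j = 1] ≤ 1/(10d)`. -/
theorem stmt_3 (n d : ℕ) (hd : 1 ≤ d) (f : (Fin n → Bool) → Bool)
    (hf : Set.ncard {i | IsRelevant f i} ≤ d)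
    (a : Fin n → Bool) (j : Fin n) (hj : IsSensitive f a j)
    (i : Fin n) (hi : ¬ IsRelevant f i) :
    ENNReal.ofReal (1 / (5 * (d : ℝ))) ≤
      bernoulliPi n d {b : Fin n → Bool | f (fun k => xor (a k) (b k)) = f a ∧ b i = true} ∧
    bernoulliPi n d {b : Fin n → Bool | f (fun k => xor (a k) (b k)) = f a ∧ b j = true} ≤
      ENNReal.ofReal (1 / (10 * (d : ℝ))) := by
  classical
  haveI hprob : IsProbabilityMeasure (bern d) := bern_prob hd
  have hBP : bernoulliPi n d = Measure.pi (fun _ : Fin n => bern d) := rfl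
  haveI : IsProbabilityMeasure (bernoulliPi n d) := by rw [hBP]; infer_instance
  have hpi : ∀ t : Fin n → Set Bool, bernoulliPi n d (Set.univ.pi t) = ∏ k, bern d (t k) := by
    intro t
    rw [hBP]
    exact Measure.pi_pi _ t
  set p : ℝ≥0∞ := (3 * (d : ℝ≥0∞))⁻¹ with hp
  set Rf : Finset (Fin n) := Finset.univ.filter (fun k => IsRelevant f k) with hRf
  have hmemRf : ∀ k, k ∈ Rf ↔ IsRelevant f k := by intro k; simp [hRf]
  have hcard : Rf.card ≤ d := by
    rw [← Set.ncard_coe_finset]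
    refine le_trans (le_of_eq ?_) hf
    congr 1; ext k; simp [hRf]
  have hjR : j ∈ Rf := (hmemRf j).mpr ⟨a, hj⟩
  have hiR : i ∉ Rf := fun h => hi ((hmemRf i).mp h)
  set D : ℝ := (d:ℝ) with hD
  have hD1 : (1:ℝ) ≤ D := by rw [hD]; exact_mod_cast hd
  have h3D : (0:ℝ) < 3 * D := by linarith
  set x : ℝ := 1 / (3 * D) with hx'
  clear_value x
  have hx0 : 0 ≤ x := by rw [hx']; positivity
  have hx3 : x ≤ 1/3 := by
    rw [hx', div_le_div_iff₀ h3D (by norm_num)]; linarith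
  have hx1' : (0:ℝ) < 1 - x := by linarith
  have hpx : p = ENNReal.ofReal x := by
    rw [hp, hx', one_div, ENNReal.ofReal_inv_of_pos h3D, ENNReal.ofReal_mul (by norm_num),
      ENNReal.ofReal_natCast, ENNReal.ofReal_ofNat]
  have h1px : 1 - p = ENNReal.ofReal (1 - x) := by
    rw [hpx, ENNReal.ofReal_sub _ hx0, ENNReal.ofReal_one]
  constructor
  · -- part 1
    set t1 : Fin n → Set Bool :=
      fun k => if k = i then {true} else if k ∈ Rf then {false} else Set.univ with ht1
    have hsub : Set.univ.pi t1 ⊆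
        {b : Fin n → Bool | f (fun k => xor (a k) (b k)) = f a ∧ b i = true} := by
      intro b hb
      have hbmem : ∀ k, b k ∈ t1 k := fun k => hb k (Set.mem_univ k)
      have hbi : b i = true := by have := hbmem i; simpa [ht1] using this
      refine ⟨?_, hbi⟩
      apply eq_of_agree_irrel f Finset.univ
      intro k hk
      refine ⟨Finset.mem_univ k, ?_⟩
      intro hrel
      have hkR : k ∈ Rf := (hmemRf k).mpr hrel
      have hki : k ≠ i := fun he => hi (he ▸ hrel)
      have hbf : b k = false := by have := hbmem k; simpa [ht1, hki, hkR] using this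
      rw [hbf] at hk
      simp at hk
    refine le_trans ?_ (measure_mono hsub)
    rw [hpi t1]
    have hval : ∀ k, bern d (t1 k) =
        (if k = i then p else 1) * (if k ∈ Rf then 1 - p else 1) := by
      intro k
      by_cases hki : k = i
      · subst hki; simp [ht1, hiR, bern_true, hp]
      · by_cases hkR : k ∈ Rf
        · simp [ht1, hki, hkR, bern_false, hp]
        · simp [ht1, hki, hkR, bern_univ2 hd]
    rw [Finset.prod_congr rfl (fun k _ => hval k), Finset.prod_mul_distrib,
      Finset.prod_ite_eq' Finset.univ i (fun _ => p),
      Finset.prod_ite_mem Finset.univ Rf (fun _ => 1 - p),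
      Finset.univ_inter, Finset.prod_const]
    simp only [Finset.mem_univ, if_true]
    rw [h1px, hpx, ← ENNReal.ofReal_pow (by linarith), ← ENNReal.ofReal_mul hx0]
    apply ENNReal.ofReal_le_ofReal
    have hb1 : (1 - x)^(d:ℕ) ≤ (1-x)^Rf.card :=
      pow_le_pow_of_le_one (by linarith) (by linarith) hcard
    have hb2 : (2:ℝ)/3 ≤ (1-x)^(d:ℕ) := by
      have hber := one_add_mul_le_pow (a := -x) (by linarith) d
      have hdx : D * x = 1/3 := by
        rw [hx']; field_simp
      calc (2:ℝ)/3 = 1 + D * (-x) := by rw [mul_neg, hdx]; norm_num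
      _ ≤ (1 + -x)^d := by exact_mod_cast hber
      _ = (1 - x)^d := by ring_nf
    have hB : (2:ℝ)/3 ≤ (1-x)^Rf.card := le_trans hb2 hb1
    calc 1/(5*D) ≤ x * (2/3) := by
          rw [hx', div_mul_eq_mul_div, one_mul, div_le_div_iff₀ (by linarith) (by linarith)]
          nlinarith
      _ ≤ x * ((1-x)^Rf.card) := mul_le_mul_of_nonneg_left hB hx0
  · -- part 2
    set m : ℕ := (Rf.erase j).card with hm
    set tA : Fin n → Set Bool := fun k => if k = j then {true} else Set.univ with htA
    set tB : Fin n → Set Bool :=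
      fun k => if k = j then {true} else if k ∈ Rf.erase j then {false} else Set.univ with htB
    have hBA : Set.univ.pi tB ⊆ Set.univ.pi tA := by
      apply Set.pi_mono
      intro k _
      by_cases hkj : k = j
      · subst hkj; simp [htA, htB]
      · simp only [htA, if_neg hkj]; exact Set.subset_univ _
    have hsub : {b : Fin n → Bool | f (fun k => xor (a k) (b k)) = f a ∧ b j = true} ⊆
        Set.univ.pi tA \ Set.univ.pi tB := by
      rintro b ⟨hfb, hbj⟩
      constructor
      · intro k _
        by_cases hkj : k = j
        · subst hkj; simp [htA, hbj]
        · simp [htA, hkj]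
      · intro hbB
        have hbmem : ∀ k, b k ∈ tB k := fun k => hbB k (Set.mem_univ k)
        have hkey : ∀ k ∈ Rf.erase j, b k = false := by
          intro k hk
          have hkj : k ≠ j := (Finset.mem_erase.mp hk).1
          have hk2 : k ∈ Rf := (Finset.mem_erase.mp hk).2
          have := hbmem k; simpa [htB, hkj, hk, hk2] using this
        have heq : f (fun k => xor (a k) (b k)) = f (Function.update a j (!(a j))) := by
          apply eq_of_agree_irrel f Finset.univ
          intro k hk
          refine ⟨Finset.mem_univ k, ?_⟩
          intro hrel
          by_cases hkj : k = j
          · subst hkj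
            rw [Function.update_self, hbj] at hk
            simp at hk
          · have hke : k ∈ Rf.erase j := Finset.mem_erase.mpr ⟨hkj, (hmemRf k).mpr hrel⟩
            rw [hkey k hke, Function.update_of_ne hkj] at hk
            simp at hk
        have hne : f (Function.update a j (!(a j))) ≠ f a := by
          intro he
          apply hj
          show f (Function.update a j false) = f (Function.update a j true)
          cases haj : a j
          · have ha2 : Function.update a j false = a := by
              conv_rhs => rw [← Function.update_eq_self j a]
              rw [haj]
            rw [haj] at he
            simp only [Bool.not_false] at he
            rw [ha2]
            exact he.symm
          · have ha2 : Function.update a j true = a := by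
              conv_rhs => rw [← Function.update_eq_self j a]
              rw [haj]
            rw [haj] at he
            simp only [Bool.not_true] at he
            rw [ha2]
            exact he
        exact hne (heq ▸ hfb)
    have hmA : bernoulliPi n d (Set.univ.pi tA) = p := by
      rw [hpi tA]
      have hval : ∀ k, bern d (tA k) = if k = j then p else 1 := by
        intro k; by_cases hkj : k = j <;> simp [htA, hkj, bern_true, bern_univ2 hd, hp]
      rw [Finset.prod_congr rfl (fun k _ => hval k), Finset.prod_ite_eq' Finset.univ j (fun _ => p)]
      simp
    have hmB : bernoulliPi n d (Set.univ.pi tB) = p * (1-p)^m := by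
      rw [hpi tB]
      have hval : ∀ k, bern d (tB k) =
          (if k = j then p else 1) * (if k ∈ Rf.erase j then 1 - p else 1) := by
        intro k
        by_cases hkj : k = j
        · subst hkj; simp [htB, Finset.notMem_erase, bern_true, hp]
        · by_cases hkR : k ∈ Rf.erase j
          · have hk2 : k ∈ Rf := (Finset.mem_erase.mp hkR).2
            simp [htB, hkj, hkR, hk2, bern_false, hp]
          · have hk2 : k ∉ Rf := fun h => hkR (Finset.mem_erase.mpr ⟨hkj, h⟩)
            simp [htB, hkj, hkR, hk2, bern_univ2 hd]
      rw [Finset.prod_congr rfl (fun k _ => hval k), Finset.prod_mul_distrib,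
        Finset.prod_ite_eq' Finset.univ j (fun _ => p),
        Finset.prod_ite_mem Finset.univ (Rf.erase j) (fun _ => 1 - p),
        Finset.univ_inter, Finset.prod_const]
      simp [hm]
    have hmeasB : MeasurableSet (Set.univ.pi tB) :=
      MeasurableSet.pi Set.countable_univ (fun k _ => trivial)
    have hdiff : bernoulliPi n d (Set.univ.pi tA \ Set.univ.pi tB) = p - p * (1-p)^m := by
      rw [measure_diff hBA hmeasB.nullMeasurableSet (measure_ne_top _ _), hmA, hmB]
    refine le_trans (measure_mono hsub) ?_
    rw [hdiff]
    have hm1 : m ≤ d - 1 := by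
      rw [hm, Finset.card_erase_of_mem hjR]; omega
    clear_value m
    have hxpow0 : (0:ℝ) ≤ x * (1-x)^m := by positivity
    rw [h1px, hpx, ← ENNReal.ofReal_pow (by linarith), ← ENNReal.ofReal_mul hx0,
      ← ENNReal.ofReal_sub _ hxpow0]
    apply ENNReal.ofReal_le_ofReal
    -- real inequality: x - x*(1-x)^m ≤ 1/(10*D)
    set y : ℝ := x / (1 - x) with hy'
    clear_value y
    have hy0 : 0 ≤ y := by rw [hy']; positivity
    have hexp1 : Real.exp (-y) ≤ 1 - x := by
      have h1 : 1/(1-x) ≤ Real.exp y := by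
        have h2 := Real.add_one_le_exp y
        have h3 : y + 1 = 1/(1-x) := by rw [hy']; field_simp; ring
        linarith
      rw [Real.exp_neg]
      have h4 : (1/(1-x))⁻¹ ≤ (1-x) := by
        rw [one_div, inv_inv]
      calc (Real.exp y)⁻¹ ≤ (1/(1-x))⁻¹ := by
            apply inv_anti₀ (by positivity) h1
        _ ≤ 1 - x := h4
    have hexp2 : Real.exp (-y)^(d-1) ≤ (1-x)^(d-1) :=
      pow_le_pow_left₀ (Real.exp_nonneg _) hexp1 _
    have hexp3 : Real.exp (-y)^(d-1) = Real.exp (((d-1:ℕ):ℝ) * (-y)) :=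
      (Real.exp_nat_mul _ _).symm
    have hdm : ((d-1:ℕ):ℝ) = D - 1 := by
      rw [Nat.cast_sub hd]; simp [hD]
    have hyval : y = 1/(3*D - 1) := by
      rw [hy', hx']
      have h1 : (3*D) ≠ 0 := by linarith
      have h2 : (3*D - 1) ≠ 0 := by linarith
      field_simp
    have h4 : -(1/3:ℝ) ≤ ((d-1:ℕ):ℝ) * (-y) := by
      rw [hdm]
      have h5 : (D-1) * y ≤ 1/3 := by
        rw [hyval, mul_one_div, div_le_div_iff₀ (by linarith) (by norm_num)]
        linarith
      nlinarith
    have h5 : Real.exp (-(1/3:ℝ)) ≤ Real.exp (((d-1:ℕ):ℝ) * (-y)) := Real.exp_le_exp.mpr h4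
    have h6 : (7:ℝ)/10 ≤ Real.exp (-(1/3:ℝ)) := by
      apply le_of_pow_le_pow_left₀ (n := 3) (by norm_num) (Real.exp_nonneg _)
      have he3 : Real.exp (-(1/3:ℝ))^(3:ℕ) = Real.exp (-1) := by
        rw [← Real.exp_nat_mul]; norm_num
      rw [he3, Real.exp_neg]
      have hlt : Real.exp 1 ≤ 1000/343 := by nlinarith [Real.exp_one_lt_d9]
      calc ((7:ℝ)/10)^(3:ℕ) = ((1000:ℝ)/343)⁻¹ := by norm_num
        _ ≤ (Real.exp 1)⁻¹ := by
            apply inv_anti₀ (Real.exp_pos 1) hlt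
    have h7 : (7:ℝ)/10 ≤ (1-x)^(d-1) := by
      calc (7:ℝ)/10 ≤ Real.exp (-(1/3:ℝ)) := h6
        _ ≤ Real.exp (((d-1:ℕ):ℝ) * (-y)) := h5
        _ = Real.exp (-y)^(d-1) := hexp3.symm
        _ ≤ (1-x)^(d-1) := hexp2
    have h8 : (1-x)^(d-1) ≤ (1-x)^m :=
      pow_le_pow_of_le_one (by linarith) (by linarith) hm1
    have h9 : (7:ℝ)/10 ≤ (1-x)^m := le_trans h7 h8
    have h10 : x * (1 - (1-x)^m) ≤ x * (3/10) :=
      mul_le_mul_of_nonneg_left (by linarith) hx0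
    calc x - x*(1-x)^m = x * (1 - (1-x)^m) := by ring
      _ ≤ x * (3/10) := h10
      _ ≤ 1/(10*D) := le_of_eq (by rw [hx']; ring)
end

section
/- Let m ≥ 1 and 1 ≤ t ≤ 2m be integers, and let s₁,…,s_t and r₁,…,r_t be nonnegative integers with ∑_{i=1}^t s_i = ∑_{i=1}^t r_i = m, such that for every i, if s_i·r_i = 0 then s_i + r_i = 1. Then 2·∑_{i=1}^t s_i·r_i ≤ 2m² − (t−1)·m. -/
/-- Concentration lemma: for pairs with both coordinates at least 1,
the sum of products is at most the product after merging all into one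
component plus `(card - 1)`. -/
lemma merge_lemma {ι : Type*} [DecidableEq ι] (A : Finset ι) (s r : ι → ℤ)
    (hA : A.Nonempty) (hs : ∀ i ∈ A, 1 ≤ s i) (hr : ∀ i ∈ A, 1 ≤ r i) :
    ∑ i ∈ A, s i * r i ≤
      (∑ i ∈ A, s i - A.card + 1) * (∑ i ∈ A, r i - A.card + 1) + (A.card - 1) := by
  induction hA using Finset.Nonempty.cons_induction with
  | singleton i => simp
  | cons i A hi hA ih =>
    have hs' : ∀ j ∈ A, 1 ≤ s j := fun j hj => hs j (Finset.mem_cons_of_mem hj)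
    have hr' : ∀ j ∈ A, 1 ≤ r j := fun j hj => hr j (Finset.mem_cons_of_mem hj)
    have hsi : 1 ≤ s i := hs i (Finset.mem_cons_self i A)
    have hri : 1 ≤ r i := hr i (Finset.mem_cons_self i A)
    have ih' := ih hs' hr'
    have hSc : (A.card : ℤ) ≤ ∑ j ∈ A, s j := by
      have := Finset.card_nsmul_le_sum A s 1 hs'
      simpa using this
    have hRc : (A.card : ℤ) ≤ ∑ j ∈ A, r j := by
      have := Finset.card_nsmul_le_sum A r 1 hr'
      simpa using this
    rw [Finset.sum_cons, Finset.sum_cons, Finset.sum_cons, Finset.card_cons]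
    push_cast
    set S := ∑ j ∈ A, s j
    set R := ∑ j ∈ A, r j
    set c := (A.card : ℤ)
    nlinarith [mul_nonneg (by linarith : (0:ℤ) ≤ s i - 1) (by linarith : (0:ℤ) ≤ R - c),
      mul_nonneg (by linarith : (0:ℤ) ≤ S - c) (by linarith : (0:ℤ) ≤ r i - 1)]

/-- Let `m ≥ 1` and `1 ≤ t ≤ 2m` be integers, and let `s₁,…,s_t` and
`r₁,…,r_t` be nonnegative integers with `∑ sᵢ = ∑ rᵢ = m`, such that for every `i`,
if `sᵢ·rᵢ = 0` then `sᵢ + rᵢ = 1`.  Then `2·∑ sᵢ·rᵢ ≤ 2m² − (t−1)·m`. -/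
theorem stmt_5 (m t : ℕ) (hm : 1 ≤ m) (ht1 : 1 ≤ t) (ht2 : t ≤ 2 * m)
    (s r : Fin t → ℤ) (hs0 : ∀ i, 0 ≤ s i) (hr0 : ∀ i, 0 ≤ r i)
    (hs : ∑ i, s i = (m : ℤ)) (hr : ∑ i, r i = (m : ℤ))
    (h01 : ∀ i, s i * r i = 0 → s i + r i = 1) :
    2 * ∑ i, s i * r i ≤ 2 * (m : ℤ) ^ 2 - ((t : ℤ) - 1) * m := by
  classical
  set A : Finset (Fin t) := Finset.univ.filter (fun i => s i ≠ 0 ∧ r i ≠ 0) with hA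
  -- outside A the product is 0 and s + r = 1
  have hout : ∀ i ∈ Aᶜ, s i * r i = 0 := by
    intro i hi
    simp only [hA, Finset.mem_compl, Finset.mem_filter, Finset.mem_univ, true_and,
      not_and_or, not_not] at hi
    rcases hi with h | h <;> simp [h]
  have hout1 : ∀ i ∈ Aᶜ, s i + r i = 1 := fun i hi => h01 i (hout i hi)
  have hin_s : ∀ i ∈ A, 1 ≤ s i := by
    intro i hi
    simp only [hA, Finset.mem_filter, Finset.mem_univ, true_and] at hi
    exact lt_of_le_of_ne (hs0 i) (Ne.symm hi.1)
  have hin_r : ∀ i ∈ A, 1 ≤ r i := by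
    intro i hi
    simp only [hA, Finset.mem_filter, Finset.mem_univ, true_and] at hi
    exact lt_of_le_of_ne (hr0 i) (Ne.symm hi.2)
  have hsplit : ∑ i, s i * r i = ∑ i ∈ A, s i * r i := by
    rw [← Finset.sum_add_sum_compl A (fun i => s i * r i),
      Finset.sum_eq_zero hout, add_zero]
  -- cardinalities
  have hcard : (A.card : ℤ) + (Aᶜ.card : ℤ) = t := by
    have := Finset.card_add_card_compl A
    simp only [Fintype.card_fin] at this
    exact_mod_cast this
  -- sums over the complement
  have hcompl : (∑ i ∈ Aᶜ, s i) + (∑ i ∈ Aᶜ, r i) = (Aᶜ.card : ℤ) := by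
    rw [← Finset.sum_add_distrib]
    rw [Finset.sum_congr rfl hout1]
    simp
  have hsS : (∑ i ∈ A, s i) + (∑ i ∈ Aᶜ, s i) = (m : ℤ) := by
    rw [Finset.sum_add_sum_compl A s, hs]
  have hsR : (∑ i ∈ A, r i) + (∑ i ∈ Aᶜ, r i) = (m : ℤ) := by
    rw [Finset.sum_add_sum_compl A r, hr]
  have hcs : ∀ i ∈ Aᶜ, 0 ≤ s i := fun i _ => hs0 i
  have hcr : ∀ i ∈ Aᶜ, 0 ≤ r i := fun i _ => hr0 i
  have hcs' : 0 ≤ ∑ i ∈ Aᶜ, s i := Finset.sum_nonneg hcs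
  have hcr' : 0 ≤ ∑ i ∈ Aᶜ, r i := Finset.sum_nonneg hcr
  rcases A.eq_empty_or_nonempty with hAe | hAne
  · -- A empty: the sum of products is zero
    rw [hsplit, hAe]
    simp only [Finset.sum_empty, mul_zero]
    have hm' : (1 : ℤ) ≤ m := by exact_mod_cast hm
    have ht2' : (t : ℤ) ≤ 2 * m := by exact_mod_cast ht2
    nlinarith
  · have hSc : (A.card : ℤ) ≤ ∑ i ∈ A, s i := by
      have := Finset.card_nsmul_le_sum A s 1 hin_s
      simpa using this
    have hRc : (A.card : ℤ) ≤ ∑ i ∈ A, r i := by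
      have := Finset.card_nsmul_le_sum A r 1 hin_r
      simpa using this
    have hac : 1 ≤ (A.card : ℤ) := by
      exact_mod_cast Finset.card_pos.mpr hAne
    have key := merge_lemma A s r hAne hin_s hin_r
    rw [hsplit]
    set S := ∑ i ∈ A, s i
    set R := ∑ i ∈ A, r i
    set a := (A.card : ℤ)
    have hSm : S ≤ (m : ℤ) := by linarith
    have hRm : R ≤ (m : ℤ) := by linarith
    have hm' : (1 : ℤ) ≤ m := by exact_mod_cast hm
    -- t = 2m + a - S - R
    have hT : (t : ℤ) = 2 * m + a - S - R := by linarith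
    nlinarith [mul_nonneg (by linarith : (0:ℤ) ≤ S - a) (by linarith : (0:ℤ) ≤ (m:ℤ) - R + a - 1),
      mul_nonneg (by linarith : (0:ℤ) ≤ (m:ℤ) - S + a - 1) (by linarith : (0:ℤ) ≤ R - a),
      mul_nonneg (by linarith : (0:ℤ) ≤ (m:ℤ)) (by linarith : (0:ℤ) ≤ a - 1)]
end

section
/- Let G be a bipartite graph with parts L and R, each of cardinality m ≥ 1, and suppose G has exactly t connected components. Then 2·|{(u,v) ∈ L × R : u and v lie in distinct connected components of G}| ≥ (t−1)·m. -/
private lemma stmt6_key (m a b a' b' : ℕ) (ha : a + a' = m) (hb : b + b' = m)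
    (h1 : 1 ≤ a + b) (h2 : a + b + 1 ≤ 2 * m) :
    2 * m ≤ 2 * (a * b') + 2 * (b * a') + 1 := by
  zify at *
  nlinarith [sq_nonneg ((a:ℤ) - b),
    mul_nonneg (by linarith : (0:ℤ) ≤ (a:ℤ) + b - 1)
      (by linarith : (0:ℤ) ≤ 2*(m:ℤ) - (a:ℤ) - b - 1)]

/-- Let `G` be a bipartite graph with parts `L` and `R`, each of
cardinality `m ≥ 1`, and suppose `G` has exactly `t` connected components.  Then
`2·|{(u,v) ∈ L × R : u, v in distinct connected components}| ≥ (t−1)·m`. -/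
theorem stmt_6 {V : Type*} [Fintype V] (G : SimpleGraph V) (L R : Set V) (m : ℕ)
    (hm : 1 ≤ m)
    (hpart : ∀ v, v ∈ L ↔ v ∉ R)
    (hL : L.ncard = m) (hR : R.ncard = m)
    (hbip : ∀ u v, G.Adj u v → (u ∈ L ∧ v ∈ R) ∨ (u ∈ R ∧ v ∈ L))
    (t : ℕ) (ht : t = Nat.card G.ConnectedComponent) :
    (t - 1) * m ≤
      2 * Set.ncard {p : V × V | p.1 ∈ L ∧ p.2 ∈ R ∧
        G.connectedComponentMk p.1 ≠ G.connectedComponentMk p.2} := by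
  classical
  haveI : Fintype G.ConnectedComponent := Fintype.ofFinite _
  set C : V → G.ConnectedComponent := G.connectedComponentMk with hCdef
  set LF : Finset V := Finset.univ.filter (· ∈ L) with hLF
  set RF : Finset V := Finset.univ.filter (· ∈ R) with hRF
  have hLset : L = ↑LF := by ext v; simp [hLF]
  have hRset : R = ↑RF := by ext v; simp [hRF]
  have hLcard : LF.card = m := by rw [hLset, Set.ncard_coe_finset] at hL; exact hL
  have hRcard : RF.card = m := by rw [hRset, Set.ncard_coe_finset] at hR; exact hR
  set SF : Finset (V × V) :=
    Finset.univ.filter (fun p => p.1 ∈ L ∧ p.2 ∈ R ∧ C p.1 ≠ C p.2) with hSF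
  have hS : {p : V × V | p.1 ∈ L ∧ p.2 ∈ R ∧ C p.1 ≠ C p.2}.ncard = SF.card := by
    rw [show {p : V × V | p.1 ∈ L ∧ p.2 ∈ R ∧ C p.1 ≠ C p.2} = ↑SF by
      ext p; simp [hSF], Set.ncard_coe_finset]
  rw [hS]
  set a : G.ConnectedComponent → ℕ := fun c => (LF.filter (fun v => C v = c)).card with ha
  set b : G.ConnectedComponent → ℕ := fun c => (RF.filter (fun v => C v = c)).card with hb
  set a' : G.ConnectedComponent → ℕ := fun c => (LF.filter (fun v => ¬ C v = c)).card with ha'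
  set b' : G.ConnectedComponent → ℕ := fun c => (RF.filter (fun v => ¬ C v = c)).card with hb'
  have haa' : ∀ c, a c + a' c = m := fun c =>
    (Finset.card_filter_add_card_filter_not
      (s := LF) (p := fun v => C v = c)).trans hLcard
  have hbb' : ∀ c, b c + b' c = m := fun c =>
    (Finset.card_filter_add_card_filter_not
      (s := RF) (p := fun v => C v = c)).trans hRcard
  -- total sums
  have hsuma : ∑ c, a c = m := by
    rw [← hLcard]
    exact (Finset.card_eq_sum_card_fiberwise (f := C) (t := Finset.univ)
      (fun x _ => Finset.mem_univ _)).symm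
  have hsumb : ∑ c, b c = m := by
    rw [← hRcard]
    exact (Finset.card_eq_sum_card_fiberwise (f := C) (t := Finset.univ)
      (fun x _ => Finset.mem_univ _)).symm
  -- first count
  have count1 : SF.card = ∑ c, a c * b' c := by
    have step1 : SF.card = ∑ u ∈ LF, (SF.filter (fun p => p.1 = u)).card :=
      Finset.card_eq_sum_card_fiberwise (f := Prod.fst) (t := LF)
        (by intro p hp; simp only [hSF, Finset.mem_coe, Finset.mem_filter] at hp
            simp [hLF, hp.2.1])
    have step2 : ∀ u ∈ LF, (SF.filter (fun p => p.1 = u)).card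
        = (RF.filter (fun v => ¬ C v = C u)).card := by
      intro u hu
      have huL : u ∈ L := by simpa [hLF] using hu
      refine Finset.card_nbij' (fun p => p.2) (fun v => (u, v)) ?_ ?_ ?_ ?_
      · intro p hp
        simp only [hSF, Finset.mem_coe, Finset.mem_filter, Finset.mem_univ, true_and] at hp
        obtain ⟨⟨_, h2, h3⟩, h4⟩ := hp
        refine Finset.mem_filter.mpr ⟨by simp [hRF, h2], fun h => h3 ?_⟩
        rw [h4, h]
      · intro v hv
        simp only [Finset.mem_coe, Finset.mem_filter] at hv
        have hvR : v ∈ R := by simpa [hRF] using hv.1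
        refine Finset.mem_filter.mpr ⟨?_, rfl⟩
        refine Finset.mem_filter.mpr ⟨Finset.mem_univ _, huL, hvR, fun h => hv.2 h.symm⟩
      · intro p hp
        simp only [Finset.mem_coe, Finset.mem_filter] at hp
        exact Prod.ext hp.2.symm rfl
      · intro v _; rfl
    calc SF.card = ∑ u ∈ LF, (RF.filter (fun v => ¬ C v = C u)).card := by
          rw [step1]; exact Finset.sum_congr rfl step2
      _ = ∑ c, ∑ u ∈ LF.filter (fun u => C u = c),
            (RF.filter (fun v => ¬ C v = C u)).card :=
          (Finset.sum_fiberwise LF C _).symm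
      _ = ∑ c, a c * b' c := by
          refine Finset.sum_congr rfl fun c _ => ?_
          rw [Finset.sum_congr rfl (fun u hu => ?_), Finset.sum_const, smul_eq_mul]
          have := (Finset.mem_filter.mp hu).2
          rw [this]
  -- second count (by second coordinate)
  have count2 : SF.card = ∑ c, b c * a' c := by
    have step1 : SF.card = ∑ u ∈ RF, (SF.filter (fun p => p.2 = u)).card :=
      Finset.card_eq_sum_card_fiberwise (f := Prod.snd) (t := RF)
        (by intro p hp; simp only [hSF, Finset.mem_coe, Finset.mem_filter] at hp
            simp [hRF, hp.2.2.1])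
    have step2 : ∀ u ∈ RF, (SF.filter (fun p => p.2 = u)).card
        = (LF.filter (fun v => ¬ C v = C u)).card := by
      intro u hu
      have huR : u ∈ R := by simpa [hRF] using hu
      refine Finset.card_nbij' (fun p => p.1) (fun v => (v, u)) ?_ ?_ ?_ ?_
      · intro p hp
        simp only [hSF, Finset.mem_coe, Finset.mem_filter, Finset.mem_univ, true_and] at hp
        obtain ⟨⟨h1, _, h3⟩, h4⟩ := hp
        refine Finset.mem_filter.mpr ⟨by simp [hLF, h1], fun h => h3 ?_⟩
        rw [h, h4]
      · intro v hv
        simp only [Finset.mem_coe, Finset.mem_filter] at hv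
        have hvL : v ∈ L := by simpa [hLF] using hv.1
        refine Finset.mem_filter.mpr ⟨?_, rfl⟩
        exact Finset.mem_filter.mpr ⟨Finset.mem_univ _, hvL, huR, hv.2⟩
      · intro p hp
        simp only [Finset.mem_coe, Finset.mem_filter] at hp
        exact Prod.ext rfl hp.2.symm
      · intro v _; rfl
    calc SF.card = ∑ u ∈ RF, (LF.filter (fun v => ¬ C v = C u)).card := by
          rw [step1]; exact Finset.sum_congr rfl step2
      _ = ∑ c, ∑ u ∈ RF.filter (fun u => C u = c),
            (LF.filter (fun v => ¬ C v = C u)).card :=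
          (Finset.sum_fiberwise RF C _).symm
      _ = ∑ c, b c * a' c := by
          refine Finset.sum_congr rfl fun c _ => ?_
          rw [Finset.sum_congr rfl (fun u hu => ?_), Finset.sum_const, smul_eq_mul]
          have := (Finset.mem_filter.mp hu).2
          rw [this]
  -- each component is nonempty
  have hpos : ∀ c, 1 ≤ a c + b c := by
    intro c
    obtain ⟨v, rfl⟩ := c.exists_rep
    by_cases hv : v ∈ L
    · have hmem : v ∈ LF.filter (fun w => C w = G.connectedComponentMk v) :=
        Finset.mem_filter.mpr ⟨by simp [hLF, hv], rfl⟩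
      calc 1 ≤ a (G.connectedComponentMk v) := Finset.card_pos.mpr ⟨v, hmem⟩
        _ ≤ _ := Nat.le_add_right _ _
    · have hv' : v ∈ R := by
        by_contra h; exact hv ((hpart v).mpr h)
      have hmem : v ∈ RF.filter (fun w => C w = G.connectedComponentMk v) :=
        Finset.mem_filter.mpr ⟨by simp [hRF, hv'], rfl⟩
      calc 1 ≤ b (G.connectedComponentMk v) := Finset.card_pos.mpr ⟨v, hmem⟩
        _ ≤ a _ + b _ := Nat.le_add_left _ _
  rcases le_or_gt t 1 with h1 | h2
  · have : t - 1 = 0 := by omega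
    simp [this]
  · -- t ≥ 2
    have htcard : 1 < Fintype.card G.ConnectedComponent := by
      rw [← Nat.card_eq_fintype_card, ← ht]; exact h2
    have hsumtot : ∑ c, (a c + b c) = 2 * m := by
      rw [Finset.sum_add_distrib, hsuma, hsumb]; ring
    have hupper : ∀ c, a c + b c + 1 ≤ 2 * m := by
      intro c
      obtain ⟨d, hd⟩ := Fintype.exists_ne_of_one_lt_card htcard c
      have hle : (a c + b c) + (a d + b d) ≤ ∑ e, (a e + b e) := by
        calc (a c + b c) + (a d + b d) = ∑ e ∈ {c, d}, (a e + b e) := by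
              rw [Finset.sum_pair (Ne.symm hd)]
          _ ≤ _ := Finset.sum_le_sum_of_subset (Finset.subset_univ _)
      have := hpos d
      omega
    have hcomp : ∀ c : G.ConnectedComponent,
        2 * m ≤ 2 * (a c * b' c) + 2 * (b c * a' c) + 1 := fun c =>
      stmt6_key m (a c) (b c) (a' c) (b' c) (haa' c) (hbb' c) (hpos c) (hupper c)
    have hfinal : t * (2 * m) ≤ 4 * SF.card + t := by
      have hsum : ∑ c : G.ConnectedComponent, (2 * m)
          ≤ ∑ c, (2 * (a c * b' c) + 2 * (b c * a' c) + 1) :=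
        Finset.sum_le_sum (fun c _ => hcomp c)
      have hlhs : ∑ c : G.ConnectedComponent, (2 * m) = t * (2 * m) := by
        rw [Finset.sum_const, smul_eq_mul, ht, Nat.card_eq_fintype_card]
        rfl
      have hrhs : ∑ c : G.ConnectedComponent,
          (2 * (a c * b' c) + 2 * (b c * a' c) + 1) = 4 * SF.card + t := by
        rw [Finset.sum_add_distrib, Finset.sum_add_distrib,
          ← Finset.mul_sum, ← Finset.mul_sum, ← count1, ← count2,
          Finset.sum_const, smul_eq_mul, mul_one, ht, Nat.card_eq_fintype_card]
        have : Fintype.card G.ConnectedComponent = (Finset.univ : Finset G.ConnectedComponent).card := rfl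
        rw [this]; ring
      omega
    have ht2m : t ≤ 2 * m := by
      have hsurj : Fintype.card G.ConnectedComponent ≤ Fintype.card V :=
        Fintype.card_le_of_surjective _ (Quot.exists_rep)
      have hV : Fintype.card V = 2 * m := by
        have huniv : (Set.univ : Set V).ncard = 2 * m := by
          have hdisj : Disjoint L R := by
            rw [Set.disjoint_left]; intro v hv; exact (hpart v).mp hv
          have hunion : L ∪ R = Set.univ := by
            ext v; simp only [Set.mem_union, Set.mem_univ, iff_true]
            by_cases h : v ∈ R
            · exact Or.inr h
            · exact Or.inl ((hpart v).mpr h)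
          rw [← hunion, Set.ncard_union_eq hdisj (Set.toFinite _) (Set.toFinite _),
            hL, hR]; ring
        rw [← huniv, Set.ncard_univ, Nat.card_eq_fintype_card]
      rw [← Nat.card_eq_fintype_card, ← ht] at hsurj
      omega
    obtain ⟨k, rfl⟩ : ∃ k, t = k + 2 := ⟨t - 2, by omega⟩
    have hk1 : k + 2 - 1 = k + 1 := rfl
    rw [hk1]
    nlinarith [hfinal, ht2m]
end

section
/- For all integers 1 ≤ d ≤ n, the number of functions f : {0,1}ⁿ → {0,1} with at most d relevant variables is at least C(n,d)·2^{2^{d−1}}. -/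
namespace Stmt8

variable {n : ℕ}

/-- restriction of an assignment to a finset of coordinates, via its order iso -/
def res (S' : Finset (Fin n)) {k : ℕ} (h : S'.card = k) (a : Fin n → Bool) :
    Fin k → Bool :=
  fun m => a ((S'.orderIsoOfFin h m : {x // x ∈ S'}) : Fin n)

lemma res_congr (S' : Finset (Fin n)) {k : ℕ} (h : S'.card = k) {a b : Fin n → Bool}
    (hab : ∀ j ∈ S', a j = b j) : res S' h a = res S' h b := by
  funext m
  exact hab _ (S'.orderIsoOfFin h m).2

/-- the junta function built from a set `S` (with distinguished element `max' S`) and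
a boolean function `g` on the restrictions to `S \ {max}`. -/
def jfun (S : Finset (Fin n)) (hne : S.Nonempty) {k : ℕ}
    (h : (S.erase (S.max' hne)).card = k)
    (g : (Fin k → Bool) → Bool) : (Fin n → Bool) → Bool :=
  fun a => xor (g (res (S.erase (S.max' hne)) h a))
    (a (S.max' hne) && decide (∀ j ∈ S.erase (S.max' hne), a j = true))

lemma jfun_congr (S : Finset (Fin n)) (hne : S.Nonempty) {k : ℕ}
    (h : (S.erase (S.max' hne)).card = k) (g : (Fin k → Bool) → Bool)
    {a b : Fin n → Bool} (hab : ∀ j ∈ S, a j = b j) :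
    jfun S hne h g a = jfun S hne h g b := by
  have h1 : res (S.erase (S.max' hne)) h a = res (S.erase (S.max' hne)) h b :=
    res_congr _ _ (fun j hj => hab j (Finset.mem_of_mem_erase hj))
  have h2 : a (S.max' hne) = b (S.max' hne) := hab _ (S.max'_mem hne)
  have h3 : (∀ j ∈ S.erase (S.max' hne), a j = true) ↔
      (∀ j ∈ S.erase (S.max' hne), b j = true) := by
    constructor <;> intro H j hj
    · rw [← hab j (Finset.mem_of_mem_erase hj)]; exact H j hj
    · rw [hab j (Finset.mem_of_mem_erase hj)]; exact H j hj
  simp only [jfun, h1, h2, h3]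

lemma relevant_mem (S : Finset (Fin n)) (hne : S.Nonempty) {k : ℕ}
    (h : (S.erase (S.max' hne)).card = k) (g : (Fin k → Bool) → Bool)
    {i : Fin n} (hi : IsRelevant (jfun S hne h g) i) : i ∈ S := by
  by_contra hiS
  obtain ⟨a, ha⟩ := hi
  exact ha (jfun_congr S hne h g (fun j hj => by
    have : j ≠ i := fun hji => hiS (hji ▸ hj)
    rw [Function.update_of_ne this, Function.update_of_ne this]))

lemma mem_relevant (S : Finset (Fin n)) (hne : S.Nonempty) {k : ℕ}
    (h : (S.erase (S.max' hne)).card = k) (g : (Fin k → Bool) → Bool)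
    {i : Fin n} (hi : i ∈ S) : IsRelevant (jfun S hne h g) i := by
  classical
  by_cases hii : i = S.max' hne
  · rw [hii]
    refine ⟨fun _ => true, ?_⟩
    have hupd_true : Function.update (fun _ : Fin n => true) (S.max' hne) true = (fun _ => true) := by
      funext j
      by_cases hj : j = S.max' hne
      · subst hj; simp
      · rw [Function.update_of_ne hj]
    have v1 : jfun S hne h g (Function.update (fun _ : Fin n => true) (S.max' hne) false)
        = g (res (S.erase (S.max' hne)) h (fun _ => true)) := by
      simp only [jfun, Function.update_self, Bool.false_and, Bool.xor_false]
      refine congrArg g (res_congr _ h fun j hj => ?_)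
      rw [Function.update_of_ne (Finset.ne_of_mem_erase hj)]
    have v2 : jfun S hne h g (Function.update (fun _ : Fin n => true) (S.max' hne) true)
        = xor (g (res (S.erase (S.max' hne)) h (fun _ => true))) true := by
      rw [hupd_true]
      simp only [jfun]
      congr 1
      rw [Bool.true_and]
      exact decide_eq_true (fun _ _ => trivial)
    rw [v1, v2]
    cases g (res (S.erase (S.max' hne)) h (fun _ => true)) <;> simp
  · have hiS' : i ∈ S.erase (S.max' hne) := Finset.mem_erase.mpr ⟨hii, hi⟩
    by_cases hg : ∃ a : Fin n → Bool,
        g (res (S.erase (S.max' hne)) h (Function.update a i false)) ≠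
          g (res (S.erase (S.max' hne)) h (Function.update a i true))
    · obtain ⟨a, ha⟩ := hg
      refine ⟨Function.update a (S.max' hne) false, ?_⟩
      have hres : ∀ x : Bool,
          res (S.erase (S.max' hne)) h
              (Function.update (Function.update a (S.max' hne) false) i x) =
          res (S.erase (S.max' hne)) h (Function.update a i x) := by
        intro x
        rw [Function.update_comm (fun hc => hii hc.symm)]
        refine res_congr _ h fun j hj => ?_
        rw [Function.update_of_ne (Finset.ne_of_mem_erase hj)]
      have hi₀val : ∀ x : Bool,
          Function.update (Function.update a (S.max' hne) false) i x (S.max' hne) = false := by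
        intro x
        rw [Function.update_of_ne (fun hc => hii hc.symm), Function.update_self]
      simp only [jfun, hres, hi₀val, Bool.false_and, Bool.xor_false]
      exact ha
    · push_neg at hg
      refine ⟨fun _ => true, ?_⟩
      have hupd_true : Function.update (fun _ : Fin n => true) i true = (fun _ => true) := by
        funext j
        by_cases hj : j = i
        · subst hj; simp
        · rw [Function.update_of_ne hj]
      have hAndF : decide (∀ j ∈ S.erase (S.max' hne),
          Function.update (fun _ : Fin n => true) i false j = true) = false := by
        simp only [decide_eq_false_iff_not]
        intro H
        have := H i hiS'
        rw [Function.update_self] at this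
        exact Bool.false_ne_true this
      have hAndT : decide (∀ j ∈ S.erase (S.max' hne),
          (fun _ : Fin n => true) j = true) = true := by simp
      have hgv : g (res (S.erase (S.max' hne)) h (Function.update (fun _ : Fin n => true) i false))
          = g (res (S.erase (S.max' hne)) h (fun _ => true)) := by
        rw [hg (fun _ => true), hupd_true]
      have v1 : jfun S hne h g (Function.update (fun _ : Fin n => true) i false)
          = g (res (S.erase (S.max' hne)) h (fun _ => true)) := by
        simp only [jfun, hAndF, Bool.and_false, Bool.xor_false, hgv]
      have v2 : jfun S hne h g (Function.update (fun _ : Fin n => true) i true)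
          = xor (g (res (S.erase (S.max' hne)) h (fun _ => true))) true := by
        rw [hupd_true]
        simp only [jfun]
        congr 1
        rw [Bool.true_and]
        exact decide_eq_true (fun _ _ => trivial)
      rw [v1, v2]
      cases g (res (S.erase (S.max' hne)) h (fun _ => true)) <;> simp

lemma relevant_set_eq (S : Finset (Fin n)) (hne : S.Nonempty) {k : ℕ}
    (h : (S.erase (S.max' hne)).card = k) (g : (Fin k → Bool) → Bool) :
    {i : Fin n | IsRelevant (jfun S hne h g) i} = ↑S := by
  ext i
  exact ⟨fun hi => relevant_mem S hne h g hi, fun hi => mem_relevant S hne h g hi⟩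

/-- an assignment extending a given restriction, with `false` off `S'`. -/
noncomputable def extAssign (S' : Finset (Fin n)) {k : ℕ} (h : S'.card = k)
    (r : Fin k → Bool) : Fin n → Bool :=
  fun j => if hj : j ∈ S' then r ((S'.orderIsoOfFin h).symm ⟨j, hj⟩) else false

lemma res_extAssign (S' : Finset (Fin n)) {k : ℕ} (h : S'.card = k) (r : Fin k → Bool) :
    res S' h (extAssign S' h r) = r := by
  funext m
  have hm : ((S'.orderIsoOfFin h m : {x // x ∈ S'}) : Fin n) ∈ S' := (S'.orderIsoOfFin h m).2
  simp only [res, extAssign, dif_pos hm]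
  congr 1
  rw [Subtype.coe_eta]
  exact (S'.orderIsoOfFin h).symm_apply_apply m

lemma jfun_extAssign (S : Finset (Fin n)) (hne : S.Nonempty) {k : ℕ}
    (h : (S.erase (S.max' hne)).card = k) (g : (Fin k → Bool) → Bool) (r : Fin k → Bool) :
    jfun S hne h g (extAssign (S.erase (S.max' hne)) h r) = g r := by
  have h1 : extAssign (S.erase (S.max' hne)) h r (S.max' hne) = false := by
    simp [extAssign, Finset.notMem_erase]
  simp [jfun, res_extAssign, h1]

end Stmt8

/-- For all integers `1 ≤ d ≤ n`, the number of functions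
`f : {0,1}ⁿ → {0,1}` with at most `d` relevant variables is at least `C(n,d)·2^{2^{d−1}}`. -/
theorem stmt_8 (n d : ℕ) (hd : 1 ≤ d) (hdn : d ≤ n) :
    n.choose d * 2 ^ (2 ^ (d - 1)) ≤
      Nat.card {f : (Fin n → Bool) → Bool // Set.ncard {i | IsRelevant f i} ≤ d} := by
  classical
  set T := {f : (Fin n → Bool) → Bool // Set.ncard {i | IsRelevant f i} ≤ d} with hT
  have hne : ∀ S : {S : Finset (Fin n) // S.card = d}, S.1.Nonempty := fun S =>
    Finset.card_pos.mp (by rw [S.2]; exact hd)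
  have hcard : ∀ S : {S : Finset (Fin n) // S.card = d},
      (S.1.erase (S.1.max' (hne S))).card = d - 1 := fun S => by
    rw [Finset.card_erase_of_mem (S.1.max'_mem _), S.2]
  let F : {S : Finset (Fin n) // S.card = d} × ((Fin (d-1) → Bool) → Bool) → T :=
    fun p => ⟨Stmt8.jfun p.1.1 (hne p.1) (hcard p.1) p.2, by
      rw [Stmt8.relevant_set_eq, Set.ncard_coe_finset, p.1.2]⟩
  have hFinj : Function.Injective F := by
    rintro ⟨S1, g1⟩ ⟨S2, g2⟩ hp
    have hfeq : Stmt8.jfun S1.1 (hne S1) (hcard S1) g1 =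
        Stmt8.jfun S2.1 (hne S2) (hcard S2) g2 := congrArg Subtype.val hp
    have hSeq : S1 = S2 := by
      apply Subtype.ext
      apply Finset.coe_injective
      rw [← Stmt8.relevant_set_eq S1.1 (hne S1) (hcard S1) g1,
        ← Stmt8.relevant_set_eq S2.1 (hne S2) (hcard S2) g2, hfeq]
    subst hSeq
    have hg : g1 = g2 := by
      funext r
      rw [← Stmt8.jfun_extAssign S1.1 (hne S1) (hcard S1) g1 r, hfeq,
        Stmt8.jfun_extAssign]
    rw [hg]
  have hle : Nat.card ({S : Finset (Fin n) // S.card = d} × ((Fin (d-1) → Bool) → Bool))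
      ≤ Nat.card T := Nat.card_le_card_of_injective F hFinj
  rw [Nat.card_prod] at hle
  have h1 : Nat.card {S : Finset (Fin n) // S.card = d} = n.choose d := by
    rw [Nat.card_eq_fintype_card, Fintype.card_finset_len, Fintype.card_fin]
  have h2 : Nat.card ((Fin (d-1) → Bool) → Bool) = 2 ^ (2 ^ (d-1)) := by
    rw [Nat.card_eq_fintype_card]
    simp [Fintype.card_fun]
  rw [h1, h2] at hle
  exact hle
end

section
/- For all integers 1 ≤ d ≤ n, the base-2 logarithm of the number of functions f : {0,1}ⁿ → {0,1} with at most d relevant variables is at least d·log₂(n/d) + 2^{d−1}. -/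
/- Auxiliary: counting lower bound via an explicit injection. -/

namespace Stmt9Aux

variable {n : ℕ}

/-- The junta built from a set `S`, a distinguished element `m` and a function `g` of the
coordinates in `S.erase m`. -/
def juntaFun (S : Finset (Fin n)) (m : Fin n)
    (g : ({i : Fin n // i ∈ S.erase m} → Bool) → Bool) : (Fin n → Bool) → Bool :=
  fun x => xor (decide (∀ i ∈ S, x i = true)) (g fun i => x i.1)

lemma juntaFun_congr (S : Finset (Fin n)) (m : Fin n)
    (g : ({i : Fin n // i ∈ S.erase m} → Bool) → Bool) {x y : Fin n → Bool}
    (h : ∀ i ∈ S, x i = y i) : juntaFun S m g x = juntaFun S m g y := by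
  unfold juntaFun
  congr 1
  · simp only [decide_eq_decide]
    constructor <;> intro hx i hi
    · rw [← h i hi]; exact hx i hi
    · rw [h i hi]; exact hx i hi
  · congr 1
    funext i
    exact h i.1 (Finset.mem_of_mem_erase i.2)

lemma relevant_subset (S : Finset (Fin n)) (m : Fin n)
    (g : ({i : Fin n // i ∈ S.erase m} → Bool) → Bool) {i : Fin n}
    (h : IsRelevant (juntaFun S m g) i) : i ∈ S := by
  by_contra hi
  obtain ⟨a, ha⟩ := h
  exact ha (juntaFun_congr S m g fun j hj => by
    simp [Function.update_of_ne (fun hji : j = i => hi (hji ▸ hj))])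

/-- Extension of a function on the coordinates `S.erase m` by `false` elsewhere. -/
noncomputable def ext (S : Finset (Fin n)) (m : Fin n)
    (h : {i : Fin n // i ∈ S.erase m} → Bool) : Fin n → Bool :=
  fun i => if c : i ∈ S.erase m then h ⟨i, c⟩ else false

lemma restrict_ext (S : Finset (Fin n)) (m : Fin n)
    (h : {i : Fin n // i ∈ S.erase m} → Bool) :
    (fun i : {i : Fin n // i ∈ S.erase m} => ext S m h i.1) = h := by
  funext i
  simp [ext, i.2]

lemma juntaFun_ext (S : Finset (Fin n)) (m : Fin n) (hm : m ∈ S)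
    (g : ({i : Fin n // i ∈ S.erase m} → Bool) → Bool)
    (h : {i : Fin n // i ∈ S.erase m} → Bool) :
    juntaFun S m g (ext S m h) = g h := by
  have hA : (decide (∀ i ∈ S, ext S m h i = true)) = false := by
    simp only [decide_eq_false_iff_not]
    intro hall
    have := hall m hm
    simp [ext, Finset.notMem_erase] at this
  rw [juntaFun, hA, restrict_ext]
  simp

lemma restrict_update (S : Finset (Fin n)) (m : Fin n) {s : Fin n} (hs : s ∈ S.erase m)
    (a : Fin n → Bool) (b : Bool) :
    (fun i : {i : Fin n // i ∈ S.erase m} => Function.update a s b i.1) =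
      Function.update (fun i : {i : Fin n // i ∈ S.erase m} => a i.1) ⟨s, hs⟩ b := by
  funext i
  by_cases hi : i = ⟨s, hs⟩
  · subst hi; simp
  · have : (i : Fin n) ≠ s := fun hc => hi (Subtype.ext hc)
    rw [Function.update_of_ne this, Function.update_of_ne hi]

lemma mem_relevant (S : Finset (Fin n)) (m : Fin n) (hm : m ∈ S)
    (g : ({i : Fin n // i ∈ S.erase m} → Bool) → Bool) {s : Fin n} (hs : s ∈ S) :
    IsRelevant (juntaFun S m g) s := by
  by_cases hsm : s = m
  · subst hsm
    refine ⟨fun _ => true, ?_⟩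
    have hr : ∀ b : Bool, (fun i : {i : Fin n // i ∈ S.erase s} =>
        Function.update (fun _ : Fin n => true) s b i.1) =
        (fun i : {i : Fin n // i ∈ S.erase s} => true) := by
      intro b
      funext i
      have : (i : Fin n) ≠ s := Finset.ne_of_mem_erase i.2
      rw [Function.update_of_ne this]
    simp only [juntaFun, hr]
    have h0 : (decide (∀ i ∈ S, Function.update (fun _ : Fin n => true) s false i = true))
        = false := by
      simp only [decide_eq_false_iff_not]
      intro hall
      have := hall s hs
      simp at this
    have h1 : (decide (∀ i ∈ S, Function.update (fun _ : Fin n => true) s true i = true))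
        = true := by
      simp only [decide_eq_true_eq]
      intro i _
      by_cases hi : i = s
      · subst hi; simp
      · rw [Function.update_of_ne hi]
    rw [h0, h1]
    simp
  · have hse : s ∈ S.erase m := Finset.mem_erase.2 ⟨hsm, hs⟩
    by_cases hdep : ∃ h : {i : Fin n // i ∈ S.erase m} → Bool,
        g (Function.update h ⟨s, hse⟩ false) ≠ g (Function.update h ⟨s, hse⟩ true)
    · obtain ⟨h, hgh⟩ := hdep
      refine ⟨ext S m h, ?_⟩
      have key : ∀ b : Bool, juntaFun S m g (Function.update (ext S m h) s b) =
          g (Function.update h ⟨s, hse⟩ b) := by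
        intro b
        have hA : (decide (∀ i ∈ S, Function.update (ext S m h) s b i = true)) = false := by
          simp only [decide_eq_false_iff_not]
          intro hall
          have := hall m hm
          rw [Function.update_of_ne (Ne.symm hsm)] at this
          simp [ext, Finset.notMem_erase] at this
        rw [juntaFun, hA, restrict_update S m hse, restrict_ext]
        simp
      rw [key false, key true]
      exact hgh
    · push_neg at hdep
      refine ⟨fun _ => true, ?_⟩
      have key : ∀ b : Bool, juntaFun S m g (Function.update (fun _ : Fin n => true) s b) =
          xor (decide (∀ i ∈ S, Function.update (fun _ : Fin n => true) s b i = true))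
            (g (Function.update (fun i : {i : Fin n // i ∈ S.erase m} => true) ⟨s, hse⟩ b)) := by
        intro b
        rw [juntaFun, restrict_update S m hse]
      have h0 : (decide (∀ i ∈ S, Function.update (fun _ : Fin n => true) s false i = true))
          = false := by
        simp only [decide_eq_false_iff_not]
        intro hall
        have := hall s hs
        simp at this
      have h1 : (decide (∀ i ∈ S, Function.update (fun _ : Fin n => true) s true i = true))
          = true := by
        simp only [decide_eq_true_eq]
        intro i _
        by_cases hi : i = s
        · subst hi; simp
        · rw [Function.update_of_ne hi]
      rw [key false, key true, h0, h1,
        hdep (fun i : {i : Fin n // i ∈ S.erase m} => true)]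
      simp

end Stmt9Aux

open Stmt9Aux in
lemma stmt9_card_lower (n d : ℕ) (hd : 1 ≤ d) :
    n.choose d * 2 ^ 2 ^ (d - 1) ≤
      Nat.card {f : (Fin n → Bool) → Bool // Set.ncard {i | IsRelevant f i} ≤ d} := by
  classical
  let mS : {S : Finset (Fin n) // S.card = d} → Fin n :=
    fun S => S.1.min' (Finset.card_pos.1 (by rw [S.2]; exact hd))
  have hmS : ∀ S : {S : Finset (Fin n) // S.card = d}, mS S ∈ S.1 :=
    fun S => S.1.min'_mem _
  let Φ : ((S : {S : Finset (Fin n) // S.card = d}) ×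
      (({i : Fin n // i ∈ S.1.erase (mS S)} → Bool) → Bool)) →
      {f : (Fin n → Bool) → Bool // Set.ncard {i | IsRelevant f i} ≤ d} :=
    fun p => ⟨juntaFun p.1.1 (mS p.1) p.2, by
      have hsub : {i | IsRelevant (juntaFun p.1.1 (mS p.1) p.2) i} ⊆ ↑p.1.1 :=
        fun i hi => relevant_subset _ _ _ hi
      calc Set.ncard {i | IsRelevant (juntaFun p.1.1 (mS p.1) p.2) i}
          ≤ Set.ncard (↑p.1.1 : Set (Fin n)) :=
            Set.ncard_le_ncard hsub p.1.1.finite_toSet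
        _ = p.1.1.card := Set.ncard_coe_finset _
        _ = d := p.1.2⟩
  have hrel : ∀ p, {i | IsRelevant (Φ p).1 i} = ↑p.1.1 := by
    intro p
    apply Set.Subset.antisymm
    · exact fun i hi => relevant_subset _ _ _ hi
    · exact fun i hi => mem_relevant _ _ (hmS p.1) _ hi
  have hinj : Function.Injective Φ := by
    rintro ⟨S, g⟩ ⟨S', g'⟩ h
    have hf : juntaFun S.1 (mS S) g = juntaFun S'.1 (mS S') g' := congrArg Subtype.val h
    have hS : S = S' := by
      apply Subtype.ext
      apply Finset.coe_injective
      have := hrel ⟨S, g⟩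
      rw [show (Φ ⟨S, g⟩).1 = (Φ ⟨S', g'⟩).1 from congrArg Subtype.val h, hrel ⟨S', g'⟩] at this
      exact this.symm
    subst hS
    have hg : g = g' := by
      funext x
      rw [← juntaFun_ext S.1 (mS S) (hmS S) g x, hf, juntaFun_ext S.1 (mS S) (hmS S) g' x]
    rw [hg]
  have hcard := Nat.card_le_card_of_injective Φ hinj
  have hD : Nat.card ((S : {S : Finset (Fin n) // S.card = d}) ×
      (({i : Fin n // i ∈ S.1.erase (mS S)} → Bool) → Bool)) =
      n.choose d * 2 ^ 2 ^ (d - 1) := by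
    rw [Nat.card_eq_fintype_card, Fintype.card_sigma]
    have hfib : ∀ S : {S : Finset (Fin n) // S.card = d},
        Fintype.card (({i : Fin n // i ∈ S.1.erase (mS S)} → Bool) → Bool)
          = 2 ^ 2 ^ (d - 1) := by
      intro S
      rw [Fintype.card_fun, Fintype.card_fun, Fintype.card_bool, Fintype.card_coe,
        Finset.card_erase_of_mem (hmS S), S.2]
    simp only [hfib, Finset.sum_const, smul_eq_mul]
    rw [← Fintype.card, Fintype.card_finset_len, Fintype.card_fin]
  rw [hD] at hcard
  exact hcard

lemma stmt9_pow_le_choose_mul (n d : ℕ) (hdn : d ≤ n) :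
    n ^ d ≤ n.choose d * d ^ d := by
  have key : d.factorial * n ^ d ≤ n.descFactorial d * d ^ d := by
    have h1 : ∀ m : ℕ, m ^ d = ∏ _i ∈ Finset.range d, m := by
      simp [Finset.prod_const]
    rw [← Nat.descFactorial_self, Nat.descFactorial_eq_prod_range,
      Nat.descFactorial_eq_prod_range, h1, h1,
      ← Finset.prod_mul_distrib, ← Finset.prod_mul_distrib]
    apply Finset.prod_le_prod'
    intro i hi
    calc (d - i) * n = d * n - i * n := by rw [Nat.sub_mul]
      _ ≤ n * d - i * d := by
          rw [Nat.mul_comm d n]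
          exact Nat.sub_le_sub_left (Nat.mul_le_mul_left i hdn) _
      _ = (n - i) * d := by rw [Nat.sub_mul]
  rw [Nat.descFactorial_eq_factorial_mul_choose, Nat.mul_assoc] at key
  exact Nat.le_of_mul_le_mul_left key d.factorial_pos

/-- For all integers `1 ≤ d ≤ n`, the base-2 logarithm of the number of
functions `f : {0,1}ⁿ → {0,1}` with at most `d` relevant variables is at least
`d·log₂(n/d) + 2^{d−1}`. -/
theorem stmt_9 (n d : ℕ) (hd : 1 ≤ d) (hdn : d ≤ n) :
    (d : ℝ) * Real.logb 2 ((n : ℝ) / (d : ℝ)) + 2 ^ (d - 1) ≤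
      Real.logb 2
        (Nat.card {f : (Fin n → Bool) → Bool // Set.ncard {i | IsRelevant f i} ≤ d}) := by
  have hd0 : (0 : ℝ) < (d : ℝ) := by exact_mod_cast hd
  have hn0 : (0 : ℝ) < (n : ℝ) := by
    have : 1 ≤ n := le_trans hd hdn
    exact_mod_cast this
  have hchoose : ((n : ℝ) / d) ^ d ≤ (n.choose d : ℝ) := by
    rw [div_pow, div_le_iff₀ (by positivity)]
    exact_mod_cast stmt9_pow_le_choose_mul n d hdn
  have hcpos : 0 < n.choose d := Nat.choose_pos hdn
  have hcard := stmt9_card_lower n d hd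
  have hcardR : (n.choose d : ℝ) * 2 ^ 2 ^ (d - 1) ≤
      (Nat.card {f : (Fin n → Bool) → Bool // Set.ncard {i | IsRelevant f i} ≤ d} : ℝ) := by
    exact_mod_cast hcard
  have hprodpos : (0 : ℝ) < (n.choose d : ℝ) * 2 ^ 2 ^ (d - 1) := by positivity
  calc (d : ℝ) * Real.logb 2 ((n : ℝ) / (d : ℝ)) + 2 ^ (d - 1)
      = Real.logb 2 (((n : ℝ) / d) ^ d) + 2 ^ (d - 1) := by rw [Real.logb_pow]
    _ ≤ Real.logb 2 (n.choose d : ℝ) + 2 ^ (d - 1) := by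
        have := Real.logb_le_logb_of_le (b := 2) one_lt_two
          (x := ((n : ℝ) / d) ^ d) (by positivity) hchoose
        linarith
    _ = Real.logb 2 ((n.choose d : ℝ) * 2 ^ 2 ^ (d - 1)) := by
        rw [Real.logb_mul (by positivity) (by positivity), Real.logb_pow,
          Real.logb_self_eq_one one_lt_two, mul_one]
        push_cast
        ring
    _ ≤ _ := Real.logb_le_logb_of_le one_lt_two hprodpos hcardR
end

section
/- Let d ≥ 1 and n ≥ 2d be integers. A set A ⊆ {0,1}ⁿ is an equivalent set for the class d-Junta if and only if A is a d-wise bipartite connected family. -/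
/-- The bipartite graph `B(i,j,k,z,A)` from Damaschke's characterization: left vertices
are `{0,1}^{d₂}` (the `Sum.inl` side), right vertices are `{0,1}^{d₂}` (the `Sum.inr`
side), and `(a',L)` is joined to `(a'',R)` iff some `a ∈ A` has `a|_i = a'`,
`a|_k = a''` and `a|_j = z`. -/
def JuntaBGraph {n d₁ d₂ : ℕ} (i k : Fin d₂ → Fin n) (j : Fin d₁ → Fin n)
    (z : Fin d₁ → Bool) (A : Set (Fin n → Bool)) :
    SimpleGraph ((Fin d₂ → Bool) ⊕ (Fin d₂ → Bool)) where
  Adj u v :=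
    match u, v with
    | Sum.inl a', Sum.inr a'' =>
        ∃ a ∈ A, (∀ t, a (i t) = a' t) ∧ (∀ t, a (k t) = a'' t) ∧ (∀ t, a (j t) = z t)
    | Sum.inr a'', Sum.inl a' =>
        ∃ a ∈ A, (∀ t, a (i t) = a' t) ∧ (∀ t, a (k t) = a'' t) ∧ (∀ t, a (j t) = z t)
    | _, _ => False
  symm := by
    constructor
    rintro (a' | a') (a'' | a'') h
    · exact h.elim
    · exact h
    · exact h
    · exact h.elim
  loopless := by
    constructor
    rintro (a' | a') h
    · exact h
    · exact h

/-- `A ⊆ {0,1}ⁿ` is a `d`-wise bipartite connected family if for all `d₁ + d₂ = d`,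
all tuples `i, k` of length `d₂` and `j` of length `d₁` whose `d₁ + 2d₂` entries are
distinct, and all `z ∈ {0,1}^{d₁}`, the graph `B(i,j,k,z,A)` is connected. -/
def IsBipartiteConnectedFamily (n d : ℕ) (A : Set (Fin n → Bool)) : Prop :=
  ∀ d₁ d₂ : ℕ, d₁ + d₂ = d →
    ∀ (i k : Fin d₂ → Fin n) (j : Fin d₁ → Fin n),
      Function.Injective (Sum.elim (Sum.elim i k) j) →
      ∀ z : Fin d₁ → Bool, (JuntaBGraph i k j z A).Connected


/-- The class `d`-Junta: boolean functions on `n` variables with at most `d` relevant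
variables. -/
def Junta (n d : ℕ) : Set ((Fin n → Bool) → Bool) :=
  {f | Set.ncard {i | IsRelevant f i} ≤ d}

/-- `A ⊆ {0,1}ⁿ` is an equivalent set for a class `C` of boolean functions if any two
distinct members of `C` differ on some point of `A`. -/
def IsEquivalentSetFor {n : ℕ} (A : Set (Fin n → Bool))
    (C : Set ((Fin n → Bool) → Bool)) : Prop :=
  ∀ f ∈ C, ∀ g ∈ C, f ≠ g → ∃ a ∈ A, f a ≠ g a
lemma relevant_mem_of_dep {n : ℕ} (f : (Fin n → Bool) → Bool) (S : Set (Fin n))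
    (hdep : ∀ a b : Fin n → Bool, (∀ x ∈ S, a x = b x) → f a = f b)
    (x : Fin n) (hx : IsRelevant f x) : x ∈ S := by
  by_contra hxS
  obtain ⟨a, ha⟩ := hx
  apply ha
  apply hdep
  intro y hy
  have hyx : y ≠ x := fun h => hxS (h ▸ hy)
  rw [Function.update_of_ne hyx, Function.update_of_ne hyx]

lemma update_const {n : ℕ} (f : (Fin n → Bool) → Bool) (x : Fin n)
    (h : ¬ IsRelevant f x) (a : Fin n → Bool) (v : Bool) :
    f (Function.update a x v) = f a := by
  have h' : ∀ b, f (Function.update b x false) = f (Function.update b x true) := by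
    intro b; by_contra hb; exact h ⟨b, hb⟩
  conv_rhs => rw [← Function.update_eq_self x a]
  cases v <;> cases hax : a x <;> first | rfl | exact h' a | exact (h' a).symm

lemma dep_of_relevant_subset {n : ℕ} (f : (Fin n → Bool) → Bool) (S : Set (Fin n))
    (hS : ∀ x, IsRelevant f x → x ∈ S) :
    ∀ a b : Fin n → Bool, (∀ x ∈ S, a x = b x) → f a = f b := by
  have key : ∀ (T : Finset (Fin n)) (a b : Fin n → Bool),
      (∀ x, a x ≠ b x → x ∈ T) → (∀ x ∈ S, a x = b x) → f a = f b := by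
    intro T
    induction T using Finset.induction with
    | empty =>
      intro a b hT _
      congr 1
      funext x
      by_contra h
      simpa using hT x h
    | @insert x T hx ih =>
      intro a b hT hSab
      by_cases hax : a x = b x
      · apply ih _ _ _ hSab
        intro y hy
        rcases Finset.mem_insert.mp (hT y hy) with h | h
        · subst h; exact absurd hax hy
        · exact h
      · have hxrel : ¬ IsRelevant f x := fun h => hax (hSab x (hS x h))
        calc f a = f (Function.update a x (b x)) := (update_const f x hxrel a (b x)).symm
        _ = f b := by
            apply ih
            · intro y hy
              by_cases hyx : y = x
              · subst hyx; simp at hy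
              · rw [Function.update_of_ne hyx] at hy
                rcases Finset.mem_insert.mp (hT y hy) with h | h
                · exact absurd h hyx
                · exact h
            · intro y hyS
              by_cases hyx : y = x
              · subst hyx; simp
              · rw [Function.update_of_ne hyx]; exact hSab y hyS
  intro a b
  exact key Finset.univ a b (fun x _ => Finset.mem_univ x)

lemma bool_const_of_connected {V : Type*} {G : SimpleGraph V} (H : V → Bool)
    (h : ∀ u v, G.Adj u v → H u = H v) {u v : V} (hr : G.Reachable u v) : H u = H v := by
  obtain ⟨p⟩ := hr
  induction p with
  | nil => rfl
  | cons h' p ih => exact (h _ _ h').trans ih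
lemma mem_junta_of_dep {n d : ℕ} (f : (Fin n → Bool) → Bool) (S : Set (Fin n))
    (hdep : ∀ a b : Fin n → Bool, (∀ x ∈ S, a x = b x) → f a = f b) (hcard : S.ncard ≤ d) :
    f ∈ Junta n d :=
  le_trans (Set.ncard_le_ncard (fun x hx => relevant_mem_of_dep f S hdep x hx) (Set.toFinite S)) hcard

lemma dir1 {n d : ℕ} (A : Set (Fin n → Bool))
    (hEq : IsEquivalentSetFor A (Junta n d)) : IsBipartiteConnectedFamily n d A := by
  classical
  intro d₁ d₂ hsum i k j hinj z
  rw [SimpleGraph.connected_iff]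
  refine ⟨?_, ⟨Sum.inl (fun _ => false)⟩⟩
  by_contra hpc
  rw [SimpleGraph.Preconnected] at hpc; push_neg at hpc
  obtain ⟨u, v, huv⟩ := hpc
  set G := JuntaBGraph i k j z A with hG
  set S : Set ((Fin d₂ → Bool) ⊕ (Fin d₂ → Bool)) := {w | G.Reachable u w} with hS
  have hclosed : ∀ w w', G.Adj w w' → (w ∈ S ↔ w' ∈ S) := by
    intro w w' hww'
    constructor
    · intro hw; exact hw.trans hww'.reachable
    · intro hw; exact hw.trans hww'.symm.reachable
  have huS : u ∈ S := SimpleGraph.Reachable.refl u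
  have hvS : v ∉ S := huv
  -- injectivity facts
  have hi : Function.Injective i := fun s t h => by
    have := @hinj (Sum.inl (Sum.inl s)) (Sum.inl (Sum.inl t)) (by simpa using h)
    simpa using this
  have hk : Function.Injective k := fun s t h => by
    have := @hinj (Sum.inl (Sum.inr s)) (Sum.inl (Sum.inr t)) (by simpa using h)
    simpa using this
  have hik : ∀ s t, i s ≠ k t := fun s t h => by
    have := @hinj (Sum.inl (Sum.inl s)) (Sum.inl (Sum.inr t)) (by simpa using h)
    simp at this
  have hij : ∀ s t, i s ≠ j t := fun s t h => by
    have := @hinj (Sum.inl (Sum.inl s)) (Sum.inr t) (by simpa using h)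
    simp at this
  have hkj : ∀ s t, k s ≠ j t := fun s t h => by
    have := @hinj (Sum.inl (Sum.inr s)) (Sum.inr t) (by simpa using h)
    simp at this
  -- a pair of vertices on opposite sides with different membership in S
  have hdiff : ∃ (a' a'' : Fin d₂ → Bool),
      ¬ (((Sum.inl a' : (Fin d₂ → Bool) ⊕ (Fin d₂ → Bool)) ∈ S) ↔ ((Sum.inr a'' : (Fin d₂ → Bool) ⊕ (Fin d₂ → Bool)) ∈ S)) := by
    by_contra hcon
    push_neg at hcon
    have h0 : ∀ a' a'', ((Sum.inl a' : (Fin d₂ → Bool) ⊕ (Fin d₂ → Bool)) ∈ S ↔ (Sum.inr a'' : (Fin d₂ → Bool) ⊕ (Fin d₂ → Bool)) ∈ S) := hcon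
    have hL : (Sum.inl (fun _ => false) : (Fin d₂ → Bool) ⊕ (Fin d₂ → Bool)) ∈ S := by
      cases u with
      | inl a₁ => exact (h0 _ (fun _ => false)).mpr ((h0 a₁ (fun _ => false)).mp huS)
      | inr a₂ => exact (h0 _ a₂).mpr huS
    apply hvS
    cases v with
    | inl a' => exact (h0 a' (fun _ => false)).mpr ((h0 (fun _ => false) (fun _ => false)).mp hL)
    | inr a'' => exact (h0 _ a'').mp hL
  obtain ⟨a', a'', hne⟩ := hdiff
  -- the point b realizing (a', a'', z)
  set b : Fin n → Bool := fun x =>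
    if h : ∃ t, i t = x then a' h.choose
    else if h : ∃ t, k t = x then a'' h.choose
    else if h : ∃ t, j t = x then z h.choose
    else false with hb
  have hbi : ∀ t, b (i t) = a' t := by
    intro t
    have h1 : ∃ s, i s = i t := ⟨t, rfl⟩
    rw [hb]
    simp only
    rw [dif_pos h1]
    exact congrArg a' (hi h1.choose_spec)
  have hbk : ∀ t, b (k t) = a'' t := by
    intro t
    have h1 : ¬ ∃ s, i s = k t := fun ⟨s, hs⟩ => hik s t hs
    have h2 : ∃ s, k s = k t := ⟨t, rfl⟩
    rw [hb]
    simp only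
    rw [dif_neg h1, dif_pos h2]
    exact congrArg a'' (hk h2.choose_spec)
  have hbj : ∀ t, b (j t) = z t := by
    intro t
    have h1 : ¬ ∃ s, i s = j t := fun ⟨s, hs⟩ => hij s t hs
    have h2 : ¬ ∃ s, k s = j t := fun ⟨s, hs⟩ => hkj s t hs
    have h3 : ∃ s, j s = j t := ⟨t, rfl⟩
    rw [hb]
    simp only
    rw [dif_neg h1, dif_neg h2, dif_pos h3]
    have hjinj : Function.Injective j := fun s t h => by
      have := @hinj (Sum.inr s) (Sum.inr t) (by simpa using h)
      simpa using this
    exact congrArg z (hjinj h3.choose_spec)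
  -- the two juntas
  obtain ⟨f, hf⟩ : ∃ f : (Fin n → Bool) → Bool, f = fun a =>
      if (∀ t, a (j t) = z t) ∧ (Sum.inl (fun t => a (i t)) : (Fin d₂ → Bool) ⊕ (Fin d₂ → Bool)) ∈ S then true else false := ⟨_, rfl⟩
  obtain ⟨g, hg⟩ : ∃ g : (Fin n → Bool) → Bool, g = fun a =>
      if (∀ t, a (j t) = z t) ∧ (Sum.inr (fun t => a (k t)) : (Fin d₂ → Bool) ⊕ (Fin d₂ → Bool)) ∈ S then true else false := ⟨_, rfl⟩
  have hfdep : ∀ a c : Fin n → Bool, (∀ x ∈ Set.range i ∪ Set.range j, a x = c x) → f a = f c := by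
    intro a c h
    have h1 : ∀ t, a (i t) = c (i t) := fun t => h _ (Or.inl ⟨t, rfl⟩)
    have h2 : ∀ t, a (j t) = c (j t) := fun t => h _ (Or.inr ⟨t, rfl⟩)
    simp only [hf, h1, h2]
  have hgdep : ∀ a c : Fin n → Bool, (∀ x ∈ Set.range k ∪ Set.range j, a x = c x) → g a = g c := by
    intro a c h
    have h1 : ∀ t, a (k t) = c (k t) := fun t => h _ (Or.inl ⟨t, rfl⟩)
    have h2 : ∀ t, a (j t) = c (j t) := fun t => h _ (Or.inr ⟨t, rfl⟩)
    simp only [hg, h1, h2]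
  have hrange : ∀ m (u : Fin m → Fin n), (Set.range u).ncard ≤ m := by
    intro m u
    have h1 : Set.range u = ↑(Finset.image u Finset.univ) := by simp
    rw [h1, Set.ncard_coe_finset]
    exact le_trans Finset.card_image_le (by simp)
  have hcardf : (Set.range i ∪ Set.range j).ncard ≤ d := by
    calc (Set.range i ∪ Set.range j).ncard ≤ (Set.range i).ncard + (Set.range j).ncard :=
        Set.ncard_union_le _ _
    _ ≤ d₂ + d₁ := Nat.add_le_add (hrange _ i) (hrange _ j)
    _ = d := by omega
  have hcardg : (Set.range k ∪ Set.range j).ncard ≤ d := by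
    calc (Set.range k ∪ Set.range j).ncard ≤ (Set.range k).ncard + (Set.range j).ncard :=
        Set.ncard_union_le _ _
    _ ≤ d₂ + d₁ := Nat.add_le_add (hrange _ k) (hrange _ j)
    _ = d := by omega
  have hfJ : f ∈ Junta n d := mem_junta_of_dep f _ hfdep hcardf
  have hgJ : g ∈ Junta n d := mem_junta_of_dep g _ hgdep hcardg
  have hfb : f b = (if (Sum.inl a' : (Fin d₂ → Bool) ⊕ (Fin d₂ → Bool)) ∈ S then true else false) := by
    have e1 : (fun t => b (i t)) = a' := funext hbi
    simp only [hf, hbj, e1]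
    simp
  have hgb : g b = (if (Sum.inr a'' : (Fin d₂ → Bool) ⊕ (Fin d₂ → Bool)) ∈ S then true else false) := by
    have e1 : (fun t => b (k t)) = a'' := funext hbk
    simp only [hg, hbj, e1]
    simp
  have hfgb : f b ≠ g b := by
    rw [hfb, hgb]
    by_cases h1 : (Sum.inl a' : (Fin d₂ → Bool) ⊕ (Fin d₂ → Bool)) ∈ S <;>
      by_cases h2 : (Sum.inr a'' : (Fin d₂ → Bool) ⊕ (Fin d₂ → Bool)) ∈ S
    · exact absurd (iff_of_true h1 h2) hne
    · simp [h1, h2]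
    · simp [h1, h2]
    · exact absurd (iff_of_false h1 h2) hne
  obtain ⟨a, haA, hfga⟩ := hEq f hfJ g hgJ (fun h => hfgb (by rw [h]))
  apply hfga
  by_cases hz : ∀ t, a (j t) = z t
  · have hadj : G.Adj (Sum.inl (fun t => a (i t))) (Sum.inr (fun t => a (k t))) :=
      ⟨a, haA, fun t => rfl, fun t => rfl, hz⟩
    have hiff := hclosed _ _ hadj
    simp only [hf, hg]
    by_cases hmem : (Sum.inl (fun t => a (i t)) : (Fin d₂ → Bool) ⊕ (Fin d₂ → Bool)) ∈ S
    · rw [if_pos ⟨hz, hmem⟩, if_pos ⟨hz, hiff.mp hmem⟩]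
    · rw [if_neg (fun hc => hmem hc.2), if_neg (fun hc => hmem (hiff.mpr hc.2))]
  · simp only [hf, hg]
    rw [if_neg (fun hc => hz hc.1), if_neg (fun hc => hz hc.1)]
lemma dir2 {n d : ℕ} (hd : 1 ≤ d) (hn : 2 * d ≤ n) (A : Set (Fin n → Bool))
    (hA : IsBipartiteConnectedFamily n d A) : IsEquivalentSetFor A (Junta n d) := by
  classical
  intro f hf g hg hfg
  by_contra hcon
  push_neg at hcon
  -- hcon : ∀ a ∈ A, f a = g a
  obtain ⟨b, hb⟩ : ∃ b, f b ≠ g b := by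
    by_contra h; push_neg at h; exact hfg (funext h)
  set Rf : Finset (Fin n) := Finset.univ.filter (fun x => IsRelevant f x) with hRf
  set Rg : Finset (Fin n) := Finset.univ.filter (fun x => IsRelevant g x) with hRg
  have hRfmem : ∀ x, x ∈ Rf ↔ IsRelevant f x := by intro x; simp [hRf]
  have hRgmem : ∀ x, x ∈ Rg ↔ IsRelevant g x := by intro x; simp [hRg]
  have hRfcard : Rf.card ≤ d := by
    have hf' : Set.ncard {x | IsRelevant f x} ≤ d := hf
    calc Rf.card = {x | IsRelevant f x}.ncard := by
          rw [Set.ncard_eq_toFinset_card']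
          congr 1
          ext x
          simp [hRf]
    _ ≤ d := hf'
  have hRgcard : Rg.card ≤ d := by
    have hg' : Set.ncard {x | IsRelevant g x} ≤ d := hg
    calc Rg.card = {x | IsRelevant g x}.ncard := by
          rw [Set.ncard_eq_toFinset_card']
          congr 1
          ext x
          simp [hRg]
    _ ≤ d := hg'
  set J := Rf ∩ Rg with hJdef
  set I₀ := Rf \ Rg with hI₀def
  set K₀ := Rg \ Rf with hK₀def
  set d₁ := J.card with hd₁def
  have hd₁d : d₁ ≤ d := le_trans (Finset.card_le_card Finset.inter_subset_left) hRfcard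
  set d₂ := d - d₁ with hd₂def
  have hsum : d₁ + d₂ = d := by omega
  have hRfsplit : d₁ + I₀.card = Rf.card := Finset.card_inter_add_card_sdiff Rf Rg
  have hRgsplit : d₁ + K₀.card = Rg.card := by
    have := Finset.card_inter_add_card_sdiff Rg Rf
    rwa [Finset.inter_comm] at this
  have hI₀le : I₀.card ≤ d₂ := by omega
  have hK₀le : K₀.card ≤ d₂ := by omega
  have hU : (Rf ∪ Rg).card + d₁ = Rf.card + Rg.card := Finset.card_union_add_card_inter Rf Rg
  set C := Finset.univ \ (Rf ∪ Rg) with hCdef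
  have hCcard : C.card = n - (Rf ∪ Rg).card := by
    rw [hCdef, Finset.card_sdiff_of_subset (Finset.subset_univ _), Finset.card_univ, Fintype.card_fin]
  obtain ⟨P, hPC, hPcard⟩ := Finset.exists_subset_card_eq (s := C) (n := d₂ - I₀.card) (by omega)
  obtain ⟨Q, hQCP, hQcard⟩ := Finset.exists_subset_card_eq (s := C \ P) (n := d₂ - K₀.card) (by
    have : P ⊆ C := hPC
    have := Finset.card_sdiff_of_subset hPC
    omega)
  have hPout : ∀ x ∈ P, x ∉ Rf ∧ x ∉ Rg := by
    intro x hx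
    have := hPC hx
    rw [hCdef] at this
    simp at this
    tauto
  have hQout : ∀ x ∈ Q, x ∉ Rf ∧ x ∉ Rg ∧ x ∉ P := by
    intro x hx
    have h1 := hQCP hx
    have h2 := (Finset.mem_sdiff.mp h1).1
    have h3 := (Finset.mem_sdiff.mp h1).2
    rw [hCdef] at h2
    simp at h2
    tauto
  set I := I₀ ∪ P with hIdef
  set K := K₀ ∪ Q with hKdef
  have hI₀Rf : ∀ x ∈ I₀, x ∈ Rf ∧ x ∉ Rg := by intro x hx; rw [hI₀def] at hx; simpa using hx
  have hK₀Rg : ∀ x ∈ K₀, x ∈ Rg ∧ x ∉ Rf := by intro x hx; rw [hK₀def] at hx; simpa using hx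
  have hJmem : ∀ x ∈ J, x ∈ Rf ∧ x ∈ Rg := by intro x hx; rw [hJdef] at hx; simpa using hx
  have dI₀P : Disjoint I₀ P := by
    rw [Finset.disjoint_left]
    intro x hx hxP
    exact (hPout x hxP).1 (hI₀Rf x hx).1
  have dK₀Q : Disjoint K₀ Q := by
    rw [Finset.disjoint_left]
    intro x hx hxQ
    exact (hQout x hxQ).2.1 (hK₀Rg x hx).1
  have hIcard : I.card = d₂ := by
    rw [hIdef, Finset.card_union_of_disjoint dI₀P]
    omega
  have hKcard : K.card = d₂ := by
    rw [hKdef, Finset.card_union_of_disjoint dK₀Q]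
    omega
  have hImem : ∀ x ∈ I, (x ∈ Rf ∧ x ∉ Rg) ∨ (x ∉ Rf ∧ x ∉ Rg) := by
    intro x hx
    rcases Finset.mem_union.mp hx with h | h
    · exact Or.inl (hI₀Rf x h)
    · exact Or.inr (hPout x h)
  have hKmem : ∀ x ∈ K, (x ∈ Rg ∧ x ∉ Rf) ∨ (x ∉ Rf ∧ x ∉ Rg) := by
    intro x hx
    rcases Finset.mem_union.mp hx with h | h
    · exact Or.inl (hK₀Rg x h)
    · exact Or.inr ⟨(hQout x h).1, (hQout x h).2.1⟩
  have dJI : Disjoint J I := by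
    rw [Finset.disjoint_left]
    intro x hx hxI
    rcases hImem x hxI with h | h
    · exact h.2 (hJmem x hx).2
    · exact h.1 (hJmem x hx).1
  have dJK : Disjoint J K := by
    rw [Finset.disjoint_left]
    intro x hx hxK
    rcases hKmem x hxK with h | h
    · exact h.2 (hJmem x hx).1
    · exact h.2 (hJmem x hx).2
  have dIK : Disjoint I K := by
    rw [Finset.disjoint_left]
    intro x hx hxK
    rcases Finset.mem_union.mp hx with h1 | h1 <;> rcases Finset.mem_union.mp hxK with h2 | h2
    · exact (hI₀Rf x h1).2 (hK₀Rg x h2).1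
    · exact (hQout x h2).1 (hI₀Rf x h1).1
    · exact (hPout x h1).2 (hK₀Rg x h2).1
    · exact (hQout x h2).2.2 h1
  -- the tuples
  set eI := I.equivFinOfCardEq hIcard with heI
  set eK := K.equivFinOfCardEq hKcard with heK
  set eJ := J.equivFinOfCardEq (rfl : J.card = d₁) with heJ
  set i : Fin d₂ → Fin n := fun t => ((eI.symm t : I) : Fin n) with hidef
  set k : Fin d₂ → Fin n := fun t => ((eK.symm t : K) : Fin n) with hkdef
  set j : Fin d₁ → Fin n := fun t => ((eJ.symm t : J) : Fin n) with hjdef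
  have himem : ∀ t, i t ∈ I := fun t => (eI.symm t).2
  have hkmem : ∀ t, k t ∈ K := fun t => (eK.symm t).2
  have hjmem : ∀ t, j t ∈ J := fun t => (eJ.symm t).2
  have hiinv : ∀ x (hx : x ∈ I), i (eI ⟨x, hx⟩) = x := by
    intro x hx
    rw [hidef]
    simp
  have hkinv : ∀ x (hx : x ∈ K), k (eK ⟨x, hx⟩) = x := by
    intro x hx
    rw [hkdef]
    simp
  have hjinv : ∀ x (hx : x ∈ J), j (eJ ⟨x, hx⟩) = x := by
    intro x hx
    rw [hjdef]
    simp
  have hiinj : Function.Injective i := fun s t h => eI.symm.injective (Subtype.ext h)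
  have hkinj : Function.Injective k := fun s t h => eK.symm.injective (Subtype.ext h)
  have hjinj : Function.Injective j := fun s t h => eJ.symm.injective (Subtype.ext h)
  have hinj : Function.Injective (Sum.elim (Sum.elim i k) j) := by
    intro u v h
    rcases u with s | s <;> [rcases s with s | s; skip] <;>
      (rcases v with t | t <;> [rcases t with t | t; skip]) <;>
      simp only [Sum.elim_inl, Sum.elim_inr] at h
    · exact congrArg _ (congrArg _ (hiinj h))
    · exact absurd (hkmem t) (Finset.disjoint_left.mp dIK (h ▸ himem s))
    · exact absurd (hjmem t) (Finset.disjoint_left.mp (dJI.symm) (h ▸ himem s))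
    · exact absurd (hkmem s) (Finset.disjoint_left.mp dIK (h ▸ himem t))
    · exact congrArg _ (congrArg _ (hkinj h))
    · exact absurd (hjmem t) (Finset.disjoint_left.mp (dJK.symm) (h ▸ hkmem s))
    · exact absurd (hjmem s) (Finset.disjoint_left.mp (dJI.symm) (h ▸ himem t))
    · exact absurd (hjmem s) (Finset.disjoint_left.mp (dJK.symm) (h ▸ hkmem t))
    · exact congrArg _ (hjinj h)
  set z : Fin d₁ → Bool := fun t => b (j t) with hzdef
  have hConn := hA d₁ d₂ hsum i k j hinj z
  -- dependence of f and g
  have hfdep : ∀ a c : Fin n → Bool, (∀ x ∈ (↑J ∪ ↑I : Set (Fin n)), a x = c x) → f a = f c := by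
    apply dep_of_relevant_subset
    intro x hx
    have hxRf : x ∈ Rf := (hRfmem x).mpr hx
    by_cases hxRg : x ∈ Rg
    · exact Or.inl (by rw [hJdef]; simp [hxRf, hxRg])
    · refine Or.inr ?_
      rw [hIdef]
      simp only [Finset.coe_union, Set.mem_union, Finset.mem_coe]
      exact Or.inl (by rw [hI₀def]; simp [hxRf, hxRg])
  have hgdep : ∀ a c : Fin n → Bool, (∀ x ∈ (↑J ∪ ↑K : Set (Fin n)), a x = c x) → g a = g c := by
    apply dep_of_relevant_subset
    intro x hx
    have hxRg : x ∈ Rg := (hRgmem x).mpr hx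
    by_cases hxRf : x ∈ Rf
    · exact Or.inl (by rw [hJdef]; simp [hxRf, hxRg])
    · refine Or.inr ?_
      rw [hKdef]
      simp only [Finset.coe_union, Set.mem_union, Finset.mem_coe]
      exact Or.inl (by rw [hK₀def]; simp [hxRf, hxRg])
  -- the patching function
  set Φ : (Fin d₂ → Bool) → (Fin d₂ → Bool) → (Fin n → Bool) := fun a' a'' x =>
    if hx : x ∈ I then a' (eI ⟨x, hx⟩)
    else if hx : x ∈ K then a'' (eK ⟨x, hx⟩)
    else if hx : x ∈ J then z (eJ ⟨x, hx⟩)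
    else b x with hΦdef
  have hfa : ∀ (a : Fin n → Bool) (a' c : Fin d₂ → Bool),
      (∀ t, a (i t) = a' t) → (∀ t, a (j t) = z t) → f a = f (Φ a' c) := by
    intro a a' c h1 h2
    apply hfdep
    rintro x (hx | hx) <;> rw [Finset.mem_coe] at hx
    · have hxI : x ∉ I := Finset.disjoint_left.mp dJI hx
      have hxK : x ∉ K := Finset.disjoint_left.mp dJK hx
      have e1 : Φ a' c x = z (eJ ⟨x, hx⟩) := by
        rw [hΦdef]
        simp only
        rw [dif_neg hxI, dif_neg hxK, dif_pos hx]
      rw [e1]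
      calc a x = a (j (eJ ⟨x, hx⟩)) := congrArg a (hjinv x hx).symm
      _ = z (eJ ⟨x, hx⟩) := h2 _
    · have e1 : Φ a' c x = a' (eI ⟨x, hx⟩) := by
        rw [hΦdef]
        simp only
        rw [dif_pos hx]
      rw [e1]
      calc a x = a (i (eI ⟨x, hx⟩)) := congrArg a (hiinv x hx).symm
      _ = a' (eI ⟨x, hx⟩) := h1 _
  have hga : ∀ (a : Fin n → Bool) (a'' c : Fin d₂ → Bool),
      (∀ t, a (k t) = a'' t) → (∀ t, a (j t) = z t) → g a = g (Φ c a'') := by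
    intro a a'' c h1 h2
    apply hgdep
    rintro x (hx | hx) <;> rw [Finset.mem_coe] at hx
    · have hxI : x ∉ I := Finset.disjoint_left.mp dJI hx
      have hxK : x ∉ K := Finset.disjoint_left.mp dJK hx
      have e1 : Φ c a'' x = z (eJ ⟨x, hx⟩) := by
        rw [hΦdef]
        simp only
        rw [dif_neg hxI, dif_neg hxK, dif_pos hx]
      rw [e1]
      calc a x = a (j (eJ ⟨x, hx⟩)) := congrArg a (hjinv x hx).symm
      _ = z (eJ ⟨x, hx⟩) := h2 _
    · have hxI : x ∉ I := Finset.disjoint_left.mp dIK.symm hx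
      have e1 : Φ c a'' x = a'' (eK ⟨x, hx⟩) := by
        rw [hΦdef]
        simp only
        rw [dif_neg hxI, dif_pos hx]
      rw [e1]
      calc a x = a (k (eK ⟨x, hx⟩)) := congrArg a (hkinv x hx).symm
      _ = a'' (eK ⟨x, hx⟩) := h1 _
  -- the potential function on vertices
  set H : (Fin d₂ → Bool) ⊕ (Fin d₂ → Bool) → Bool :=
    Sum.elim (fun a' => f (Φ a' (fun _ => false))) (fun a'' => g (Φ (fun _ => false) a'')) with hHdef
  have hpres : ∀ u v, (JuntaBGraph i k j z A).Adj u v → H u = H v := by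
    intro u v huv
    rcases u with a' | a' <;> rcases v with a₁ | a₁
    · exact huv.elim
    · obtain ⟨a, haA, h1, h2, h3⟩ := huv
      simp only [hHdef, Sum.elim_inl, Sum.elim_inr]
      rw [← hfa a a' (fun _ => false) h1 h3, ← hga a a₁ (fun _ => false) h2 h3]
      exact hcon a haA
    · obtain ⟨a, haA, h1, h2, h3⟩ := huv
      simp only [hHdef, Sum.elim_inl, Sum.elim_inr]
      rw [← hfa a a₁ (fun _ => false) h1 h3, ← hga a a' (fun _ => false) h2 h3]
      exact (hcon a haA).symm
    · exact huv.elim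
  have hreach : (JuntaBGraph i k j z A).Reachable
      (Sum.inl (fun t => b (i t))) (Sum.inr (fun t => b (k t))) :=
    hConn.preconnected _ _
  have hHeq := bool_const_of_connected H hpres hreach
  have e1 : H (Sum.inl (fun t => b (i t))) = f b := by
    simp only [hHdef, Sum.elim_inl]
    exact (hfa b (fun t => b (i t)) (fun _ => false) (fun t => rfl) (fun t => rfl)).symm
  have e2 : H (Sum.inr (fun t => b (k t))) = g b := by
    simp only [hHdef, Sum.elim_inr]
    exact (hga b (fun t => b (k t)) (fun _ => false) (fun t => rfl) (fun t => rfl)).symm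
  rw [e1, e2] at hHeq
  exact hb hHeq


/-- Let `d ≥ 1` and `n ≥ 2d`.  A set `A ⊆ {0,1}ⁿ` is an equivalent
set for the class `d`-Junta if and only if `A` is a `d`-wise bipartite connected
family. -/
theorem stmt_11 (n d : ℕ) (hd : 1 ≤ d) (hn : 2 * d ≤ n) (A : Set (Fin n → Bool)) :
    IsEquivalentSetFor A (Junta n d) ↔ IsBipartiteConnectedFamily n d A := by
  exact ⟨fun h => dir1 A h, fun h => dir2 hd hn A h⟩
end

section
/- Let d ≥ 1 and n ≥ 2d be integers. For a finite set A ⊆ {0,1}ⁿ define X(A) = ∑ (c(B(i,j,k,z,A)) − 1), where the sum is over all nonnegative integers d₁, d₂ with d₁ + d₂ = d, all tuples i ∈ [n]^{d₂}, j ∈ [n]^{d₁}, k ∈ [n]^{d₂} whose d₁ + 2d₂ entries are distinct, and all z ∈ {0,1}^{d₁}, and where c(B) denotes the number of connected components of the bipartite graph B. Then for every finite A ⊆ {0,1}ⁿ there exists an assignment a ∈ {0,1}ⁿ such that X(A ∪ {a}) ≤ X(A)·(1 − 1/2^{d+1}). -/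
open Classical in
/-- `X(A) = ∑ (c(B(i,j,k,z,A)) − 1)`, the sum over all `d₁ + d₂ = d`, all tuples
`i, k ∈ [n]^{d₂}`, `j ∈ [n]^{d₁}` whose `d₁ + 2d₂` entries are distinct, and all
`z ∈ {0,1}^{d₁}`, of the number of connected components of `B(i,j,k,z,A)` minus one. -/
noncomputable def XA (n d : ℕ) (A : Set (Fin n → Bool)) : ℕ :=
  ∑ p ∈ Finset.HasAntidiagonal.antidiagonal d,
    ∑ i : Fin p.2 → Fin n, ∑ k : Fin p.2 → Fin n, ∑ j : Fin p.1 → Fin n,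
      ∑ z : Fin p.1 → Bool,
        if Function.Injective (Sum.elim (Sum.elim i k) j) then
          Nat.card (JuntaBGraph i k j z A).ConnectedComponent - 1
        else 0

/- ------------------------------------------------------------------------ -/
/- Auxiliary machinery                                                       -/
/- ------------------------------------------------------------------------ -/

open Classical in
/-- Indicator of a proposition, valued in `ℕ`. -/
noncomputable def auxInd (Q : Prop) : ℕ := if Q then 1 else 0

lemma auxInd_eq_ite (Q : Prop) [Decidable Q] : auxInd Q = if Q then 1 else 0 := by
  by_cases h : Q <;> simp [auxInd, h]

lemma auxInd_pos {Q : Prop} (h : Q) : auxInd Q = 1 := by simp [auxInd, h]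

lemma auxInd_neg {Q : Prop} (h : ¬ Q) : auxInd Q = 0 := by simp [auxInd, h]

lemma auxInd_congr {Q Q' : Prop} (h : Q ↔ Q') : auxInd Q = auxInd Q' := by
  rw [propext h]

lemma auxInd_le_one (Q : Prop) : auxInd Q ≤ 1 := by
  by_cases h : Q
  · rw [auxInd_pos h]
  · rw [auxInd_neg h]; omega

lemma aux_sum_ind_card {α : Type*} (s : Finset α) (p : α → Prop) [DecidablePred p] :
    ∑ a ∈ s, auxInd (p a) = (s.filter p).card := by
  rw [Finset.card_filter]
  exact Finset.sum_congr rfl fun a _ => auxInd_eq_ite _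

open SimpleGraph

lemma aux_card_cc_le {V : Type*} [Finite V] {G G' : SimpleGraph V} (h : G ≤ G') :
    Nat.card G'.ConnectedComponent ≤ Nat.card G.ConnectedComponent := by
  apply Nat.card_le_card_of_surjective
    (ConnectedComponent.map (Hom.ofLE h))
  intro u
  refine u.ind fun v => ?_
  exact ⟨G.connectedComponentMk v, by simp⟩

lemma aux_card_surj_ne {α β : Type*} [Finite α] (f : α → β) (hf : Function.Surjective f)
    {x y : α} (hxy : x ≠ y) (hf2 : f x = f y) : Nat.card β + 1 ≤ Nat.card α := by
  classical
  have hne : Nonempty α := ⟨x⟩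
  letI : Fintype α := Fintype.ofFinite α
  have h1 : Nat.card β ≤ Nat.card {z : α // z ≠ x} := by
    apply Nat.card_le_card_of_surjective (fun z => f z.1)
    intro b
    obtain ⟨a, ha⟩ := hf b
    by_cases hax : a = x
    · refine ⟨⟨y, Ne.symm hxy⟩, ?_⟩
      show f y = b
      rw [← hf2, ← hax]; exact ha
    · exact ⟨⟨a, hax⟩, ha⟩
  have h2 : Nat.card {z : α // z ≠ x} = Nat.card α - 1 := by
    rw [Nat.card_eq_fintype_card, Nat.card_eq_fintype_card,
      Fintype.card_subtype_compl (p := fun z => z = x), Fintype.card_subtype_eq]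
  have h3 : 1 ≤ Nat.card α := Nat.card_pos
  omega

lemma aux_card_cc_merge {V : Type*} [Finite V] {G G' : SimpleGraph V} (h : G ≤ G') {x y : V}
    (hr : ¬ G.Reachable x y) (hadj : G'.Reachable x y) :
    Nat.card G'.ConnectedComponent + 1 ≤ Nat.card G.ConnectedComponent := by
  refine aux_card_surj_ne (ConnectedComponent.map (Hom.ofLE h)) ?_
    (x := G.connectedComponentMk x) (y := G.connectedComponentMk y) ?_ ?_
  · intro u
    refine u.ind fun v => ?_
    exact ⟨G.connectedComponentMk v, by simp⟩
  · intro he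
    exact hr (ConnectedComponent.eq.mp he)
  · simpa using ConnectedComponent.eq.mpr hadj

lemma aux_count {n : ℕ} {T : Type*} [Fintype T] [DecidableEq T] {e : T → Fin n}
    (he : Function.Injective e) (P : (T → Bool) → Prop) :
    ∑ a : Fin n → Bool, auxInd (P (a ∘ e))
      = 2 ^ (n - Fintype.card T) * ∑ g : T → Bool, auxInd (P g) := by
  classical
  set s : Set (Fin n) := Set.range e with hs
  let F : T ⊕ ↥(sᶜ) ≃ Fin n :=
    (Equiv.sumCongr (Equiv.ofInjective e he) (Equiv.refl _)).trans (Equiv.Set.sumCompl s)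
  have hF : ∀ t, F (Sum.inl t) = e t := fun t => rfl
  have hFe : ∀ t, F.symm (e t) = Sum.inl t := fun t => by
    rw [← hF t, Equiv.symm_apply_apply]
  have hcard : Fintype.card ↥(sᶜ) = n - Fintype.card T := by
    rw [Fintype.card_compl_set]
    simp [hs, Set.card_range_of_injective he]
  let E : ((T ⊕ ↥(sᶜ)) → Bool) ≃ (Fin n → Bool) := Equiv.arrowCongr F (Equiv.refl Bool)
  calc ∑ a : Fin n → Bool, auxInd (P (a ∘ e))
      = ∑ b : (T ⊕ ↥(sᶜ)) → Bool, auxInd (P (b ∘ Sum.inl)) := by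
        refine (Fintype.sum_equiv E _ _ fun b => ?_).symm
        have hcomp : E b ∘ e = b ∘ Sum.inl := funext fun t => by
          simp [E, Equiv.arrowCongr, hFe]
        rw [hcomp]
    _ = ∑ pr : (T → Bool) × (↥(sᶜ) → Bool), auxInd (P pr.1) := by
        refine Fintype.sum_equiv (Equiv.sumArrowEquivProdArrow _ _ _) _ _ fun b => rfl
    _ = 2 ^ (n - Fintype.card T) * ∑ g : T → Bool, auxInd (P g) := by
        simp only [Fintype.sum_prod_type]
        rw [Finset.sum_comm]
        rw [show (∑ _y : ↥(sᶜ) → Bool, ∑ g : T → Bool, auxInd (P g))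
            = Fintype.card (↥(sᶜ) → Bool) * ∑ g : T → Bool, auxInd (P g) by
          rw [Finset.sum_const, Finset.card_univ, smul_eq_mul]]
        congr 1
        simp [Fintype.card_fun, hcard]

lemma aux_arith {l r m : ℕ} (hlm : l ≤ m) (hrm : r ≤ m) (h1 : 1 ≤ l + r)
    (h2 : ¬ (l = m ∧ r = m)) : m ≤ l * (m - r) + r * (m - l) := by
  by_cases hr : r = m
  · have hl : l < m := by omega
    have : m * 1 ≤ r * (m - l) := Nat.mul_le_mul (by omega) (by omega)
    omega
  · by_cases hl : l = m
    · have : m * 1 ≤ l * (m - r) := Nat.mul_le_mul (by omega) (by omega)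
      omega
    · by_cases hl0 : l = 0
      · have : 1 * m ≤ r * (m - l) := Nat.mul_le_mul (by omega) (by omega)
        omega
      · by_cases hr0 : r = 0
        · have : 1 * m ≤ l * (m - r) := Nat.mul_le_mul (by omega) (by omega)
          omega
        · have h3 : 1 * (m - r) ≤ l * (m - r) := Nat.mul_le_mul (by omega) (le_refl _)
          have h4 : r * 1 ≤ r * (m - l) := Nat.mul_le_mul (le_refl _) (by omega)
          omega

lemma aux_bipartite {W : Type*} [Fintype W] [Nonempty W]
    (G : SimpleGraph (W ⊕ W)) :
    Nat.card G.ConnectedComponent * Fintype.card W ≤ Fintype.card W +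
      2 * ∑ pr : W × W, auxInd (¬ G.Reachable (Sum.inl pr.1) (Sum.inr pr.2)) := by
  classical
  letI : Fintype G.ConnectedComponent := Fintype.ofFinite _
  set m := Fintype.card W with hm
  rw [Nat.card_eq_fintype_card]
  set c := Fintype.card G.ConnectedComponent with hc
  by_cases hc1 : c ≤ 1
  · have : c * m ≤ 1 * m := Nat.mul_le_mul hc1 (le_refl m)
    omega
  push_neg at hc1
  set l : G.ConnectedComponent → ℕ := fun u =>
    (Finset.univ.filter fun x : W => G.connectedComponentMk (Sum.inl x) = u).card with hldef
  set r : G.ConnectedComponent → ℕ := fun u =>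
    (Finset.univ.filter fun x : W => G.connectedComponentMk (Sum.inr x) = u).card with hrdef
  have hl : m = ∑ u, l u := by
    rw [hm, ← Finset.card_univ]
    exact Finset.card_eq_sum_card_fiberwise (fun x _ => Finset.mem_univ _)
  have hr : m = ∑ u, r u := by
    rw [hm, ← Finset.card_univ]
    exact Finset.card_eq_sum_card_fiberwise (fun x _ => Finset.mem_univ _)
  have hlm : ∀ u, l u ≤ m := fun u =>
    hl ▸ Finset.single_le_sum (fun _ _ => Nat.zero_le _) (Finset.mem_univ u)
  have hrm : ∀ u, r u ≤ m := fun u =>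
    hr ▸ Finset.single_le_sum (fun _ _ => Nat.zero_le _) (Finset.mem_univ u)
  have hlr : ∀ u, 1 ≤ l u + r u := by
    intro u
    refine u.ind fun v => ?_
    cases v with
    | inl x =>
        have : 0 < l (G.connectedComponentMk (Sum.inl x)) :=
          Finset.card_pos.mpr ⟨x, Finset.mem_filter.mpr ⟨Finset.mem_univ x, rfl⟩⟩
        omega
    | inr x =>
        have : 0 < r (G.connectedComponentMk (Sum.inr x)) :=
          Finset.card_pos.mpr ⟨x, Finset.mem_filter.mpr ⟨Finset.mem_univ x, rfl⟩⟩
        omega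
  have hnotboth : ∀ u, ¬ (l u = m ∧ r u = m) := by
    rintro u ⟨h1, h2⟩
    obtain ⟨v, hv⟩ := Fintype.exists_ne_of_one_lt_card hc1 u
    have e1 : l u + ∑ u' ∈ Finset.univ.erase u, l u' = ∑ u', l u' :=
      Finset.add_sum_erase _ _ (Finset.mem_univ u)
    have e2 : l v ≤ ∑ u' ∈ Finset.univ.erase u, l u' :=
      Finset.single_le_sum (fun _ _ => Nat.zero_le _)
        (Finset.mem_erase.mpr ⟨hv, Finset.mem_univ v⟩)
    have e3 : r u + ∑ u' ∈ Finset.univ.erase u, r u' = ∑ u', r u' :=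
      Finset.add_sum_erase _ _ (Finset.mem_univ u)
    have e4 : r v ≤ ∑ u' ∈ Finset.univ.erase u, r u' :=
      Finset.single_le_sum (fun _ _ => Nat.zero_le _)
        (Finset.mem_erase.mpr ⟨hv, Finset.mem_univ v⟩)
    have := hlr v
    omega
  set S := ∑ pr : W × W, auxInd (¬ G.Reachable (Sum.inl pr.1) (Sum.inr pr.2)) with hSdef
  have hS1 : S = ∑ u, l u * (m - r u) := by
    rw [hSdef]
    simp only [Fintype.sum_prod_type]
    have inner : ∀ x : W, (∑ y : W, auxInd (¬ G.Reachable (Sum.inl x) (Sum.inr y)))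
        = m - r (G.connectedComponentMk (Sum.inl x)) := by
      intro x
      have hiff : ∀ y : W, (¬ G.Reachable (Sum.inl x) (Sum.inr y)) ↔
          ¬ (G.connectedComponentMk (Sum.inr y) = G.connectedComponentMk (Sum.inl x)) := by
        intro y
        rw [SimpleGraph.ConnectedComponent.eq]
        constructor
        · exact fun h h' => h h'.symm
        · exact fun h h' => h h'.symm
      rw [Finset.sum_congr rfl (fun y _ => auxInd_congr (hiff y))]
      rw [aux_sum_ind_card]
      have := Finset.card_filter_add_card_filter_not
        (s := (Finset.univ : Finset W))
        (p := fun y => G.connectedComponentMk (Sum.inr y) = G.connectedComponentMk (Sum.inl x))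
      rw [hrdef]
      simp only [Finset.card_univ] at this ⊢
      omega
    rw [Finset.sum_congr rfl (fun x _ => inner x)]
    rw [← Finset.sum_fiberwise_of_maps_to' (g := fun x : W => G.connectedComponentMk (Sum.inl x))
      (t := Finset.univ) (fun x _ => Finset.mem_univ _) (fun u => m - r u)]
    refine Finset.sum_congr rfl fun u _ => ?_
    rw [Finset.sum_const, smul_eq_mul, hldef]
  have hS2 : S = ∑ u, r u * (m - l u) := by
    rw [hSdef]
    simp only [Fintype.sum_prod_type_right]
    have inner : ∀ y : W, (∑ x : W, auxInd (¬ G.Reachable (Sum.inl x) (Sum.inr y)))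
        = m - l (G.connectedComponentMk (Sum.inr y)) := by
      intro y
      have hiff : ∀ x : W, (¬ G.Reachable (Sum.inl x) (Sum.inr y)) ↔
          ¬ (G.connectedComponentMk (Sum.inl x) = G.connectedComponentMk (Sum.inr y)) := by
        intro x
        rw [SimpleGraph.ConnectedComponent.eq]
      rw [Finset.sum_congr rfl (fun x _ => auxInd_congr (hiff x))]
      rw [aux_sum_ind_card]
      have := Finset.card_filter_add_card_filter_not
        (s := (Finset.univ : Finset W))
        (p := fun x => G.connectedComponentMk (Sum.inl x) = G.connectedComponentMk (Sum.inr y))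
      rw [hldef]
      simp only [Finset.card_univ] at this ⊢
      omega
    rw [Finset.sum_congr rfl (fun y _ => inner y)]
    rw [← Finset.sum_fiberwise_of_maps_to' (g := fun y : W => G.connectedComponentMk (Sum.inr y))
      (t := Finset.univ) (fun x _ => Finset.mem_univ _) (fun u => m - l u)]
    refine Finset.sum_congr rfl fun u _ => ?_
    rw [Finset.sum_const, smul_eq_mul, hrdef]
  have key : c * m ≤ (∑ u, l u * (m - r u)) + ∑ u, r u * (m - l u) := by
    rw [← Finset.sum_add_distrib]
    calc c * m = ∑ _u : G.ConnectedComponent, m := by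
          rw [Finset.sum_const, Finset.card_univ, smul_eq_mul]
      _ ≤ ∑ u, (l u * (m - r u) + r u * (m - l u)) :=
        Finset.sum_le_sum fun u _ => aux_arith (hlm u) (hrm u) (hlr u) (hnotboth u)
  omega

lemma aux_collapse {d₁ d₂ : ℕ} (z : Fin d₁ → Bool)
    (D : (Fin d₂ → Bool) → (Fin d₂ → Bool) → Prop) :
    (∑ g : ((Fin d₂ ⊕ Fin d₂) ⊕ Fin d₁) → Bool,
      auxInd ((∀ t, g (Sum.inr t) = z t) ∧
        D (fun t => g (Sum.inl (Sum.inl t))) (fun t => g (Sum.inl (Sum.inr t)))))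
    = ∑ pr : (Fin d₂ → Bool) × (Fin d₂ → Bool), auxInd (D pr.1 pr.2) := by
  classical
  have inner : ∀ (Q : Prop),
      (∑ w : Fin d₁ → Bool, auxInd ((∀ t, w t = z t) ∧ Q)) = auxInd Q := by
    intro Q
    have h1 : ∀ w : Fin d₁ → Bool, auxInd ((∀ t, w t = z t) ∧ Q)
        = if w = z then auxInd Q else 0 := by
      intro w
      by_cases hw : w = z
      · subst hw
        rw [if_pos rfl]
        exact auxInd_congr (by simp)
      · have hnw : ¬ ((∀ t, w t = z t) ∧ Q) := fun h => hw (funext h.1)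
        rw [auxInd_neg hnw, if_neg hw]
    rw [Finset.sum_congr rfl (fun w _ => h1 w)]
    rw [Finset.sum_ite_eq' Finset.univ z (fun _ => auxInd Q)]
    simp
  calc (∑ g : ((Fin d₂ ⊕ Fin d₂) ⊕ Fin d₁) → Bool,
        auxInd ((∀ t, g (Sum.inr t) = z t) ∧
          D (fun t => g (Sum.inl (Sum.inl t))) (fun t => g (Sum.inl (Sum.inr t)))))
      = ∑ q : ((Fin d₂ ⊕ Fin d₂) → Bool) × (Fin d₁ → Bool),
          auxInd ((∀ t, q.2 t = z t) ∧
            D (fun t => q.1 (Sum.inl t)) (fun t => q.1 (Sum.inr t))) := by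
        refine Fintype.sum_equiv (Equiv.sumArrowEquivProdArrow _ _ _) _ _ fun g => rfl
    _ = ∑ u : (Fin d₂ ⊕ Fin d₂) → Bool,
          auxInd (D (fun t => u (Sum.inl t)) (fun t => u (Sum.inr t))) := by
        simp only [Fintype.sum_prod_type]
        exact Finset.sum_congr rfl fun u _ => inner _
    _ = ∑ pr : (Fin d₂ → Bool) × (Fin d₂ → Bool), auxInd (D pr.1 pr.2) := by
        refine Fintype.sum_equiv (Equiv.sumArrowEquivProdArrow _ _ _) _ _ fun u => rfl

lemma aux_key2 {n d d₁ d₂ : ℕ} (hd : d₁ + d₂ = d) (hn : 2 * d ≤ n)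
    (i k : Fin d₂ → Fin n) (j : Fin d₁ → Fin n) (z : Fin d₁ → Bool)
    (G : SimpleGraph ((Fin d₂ → Bool) ⊕ (Fin d₂ → Bool)))
    (he : Function.Injective (Sum.elim (Sum.elim i k) j)) :
    2 ^ n * (Nat.card G.ConnectedComponent - 1)
      ≤ 2 ^ (d+1) * ∑ a : Fin n → Bool,
          auxInd ((∀ t, a (j t) = z t) ∧
            ¬ G.Reachable (Sum.inl fun t => a (i t)) (Sum.inr fun t => a (k t))) := by
  classical
  set c := Nat.card G.ConnectedComponent with hcdef
  have hc1 : 1 ≤ c := by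
    have h1 : Nonempty G.ConnectedComponent :=
      ⟨G.connectedComponentMk (Sum.inl fun _ => false)⟩
    have h2 : Finite G.ConnectedComponent := Quot.finite _
    exact Nat.card_pos
  set S := ∑ pr : (Fin d₂ → Bool) × (Fin d₂ → Bool),
    auxInd (¬ G.Reachable (Sum.inl pr.1) (Sum.inr pr.2)) with hSdef
  have hcardT : Fintype.card ((Fin d₂ ⊕ Fin d₂) ⊕ Fin d₁) = d + d₂ := by
    simp only [Fintype.card_sum, Fintype.card_fin]
    omega
  have hW : Fintype.card (Fin d₂ → Bool) = 2 ^ d₂ := by simp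
  have hb := aux_bipartite G
  rw [hW] at hb
  have hb' : c * 2 ^ d₂ ≤ 2 ^ d₂ + 2 * S := hb
  clear_value c S
  have h2 : 2 ^ d₂ * (c - 1) ≤ 2 * S := by
    have heq : (c - 1) * 2 ^ d₂ + 2 ^ d₂ = c * 2 ^ d₂ := by
      have h7 : c - 1 + 1 = c := by omega
      calc (c - 1) * 2 ^ d₂ + 2 ^ d₂ = (c - 1 + 1) * 2 ^ d₂ := by ring
        _ = c * 2 ^ d₂ := by rw [h7]
    calc 2 ^ d₂ * (c - 1) = (c - 1) * 2 ^ d₂ := by ring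
      _ ≤ 2 * S := by omega
  obtain ⟨q, hq⟩ : ∃ q, n = q + (d + d₂) := ⟨n - (d + d₂), by omega⟩
  have hqn : n - (d + d₂) = q := by omega
  have hcount : (∑ a : Fin n → Bool,
        auxInd ((∀ t, a (j t) = z t) ∧
          ¬ G.Reachable (Sum.inl fun t => a (i t)) (Sum.inr fun t => a (k t))))
      = 2 ^ (n - (d + d₂)) * S := by
    have h := aux_count he (fun g : ((Fin d₂ ⊕ Fin d₂) ⊕ Fin d₁) → Bool =>
      (∀ t, g (Sum.inr t) = z t) ∧
        ¬ G.Reachable (Sum.inl fun t => g (Sum.inl (Sum.inl t)))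
          (Sum.inr fun t => g (Sum.inl (Sum.inr t))))
    rw [hcardT] at h
    have h2 := aux_collapse z (fun x y => ¬ G.Reachable (Sum.inl x) (Sum.inr y))
    calc (∑ a : Fin n → Bool,
          auxInd ((∀ t, a (j t) = z t) ∧
            ¬ G.Reachable (Sum.inl fun t => a (i t)) (Sum.inr fun t => a (k t))))
        = ∑ a : Fin n → Bool,
            auxInd ((fun g : ((Fin d₂ ⊕ Fin d₂) ⊕ Fin d₁) → Bool =>
              (∀ t, g (Sum.inr t) = z t) ∧
                ¬ G.Reachable (Sum.inl fun t => g (Sum.inl (Sum.inl t)))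
                  (Sum.inr fun t => g (Sum.inl (Sum.inr t))))
              (a ∘ Sum.elim (Sum.elim i k) j)) := rfl
      _ = 2 ^ (n - (d + d₂)) * ∑ g : ((Fin d₂ ⊕ Fin d₂) ⊕ Fin d₁) → Bool,
            auxInd ((∀ t, g (Sum.inr t) = z t) ∧
              ¬ G.Reachable (Sum.inl fun t => g (Sum.inl (Sum.inl t)))
                (Sum.inr fun t => g (Sum.inl (Sum.inr t)))) := h
      _ = 2 ^ (n - (d + d₂)) * S := by rw [h2, hSdef]
  rw [hcount, hqn]
  calc 2 ^ n * (c - 1) = 2 ^ q * 2 ^ d * (2 ^ d₂ * (c - 1)) := by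
        rw [hq, pow_add, pow_add]
        ring
    _ ≤ 2 ^ q * 2 ^ d * (2 * S) := Nat.mul_le_mul_left _ h2
    _ = 2 ^ (d+1) * (2 ^ q * S) := by rw [pow_succ]; ring

set_option maxHeartbeats 1000000 in
lemma aux_perterm {n d d₁ d₂ : ℕ} (hd : d₁ + d₂ = d) (hn : 2 * d ≤ n)
    (i k : Fin d₂ → Fin n) (j : Fin d₁ → Fin n) (z : Fin d₁ → Bool)
    (A : Set (Fin n → Bool))
    (he : Function.Injective (Sum.elim (Sum.elim i k) j)) :
    2 ^ (d+1) * ∑ a : Fin n → Bool,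
        (Nat.card (JuntaBGraph i k j z (A ∪ {a})).ConnectedComponent - 1)
      ≤ (2 ^ (d+1) - 1) * (2 ^ n *
        (Nat.card (JuntaBGraph i k j z A).ConnectedComponent - 1)) := by
  classical
  have hmono : ∀ a : Fin n → Bool,
      JuntaBGraph i k j z A ≤ JuntaBGraph i k j z (A ∪ {a}) := by
    intro a
    rintro (x | x) (y | y) h
    · exact h.elim
    · obtain ⟨b, hb, h1, h2, h3⟩ := h
      exact ⟨b, Set.mem_union_left _ hb, h1, h2, h3⟩
    · obtain ⟨b, hb, h1, h2, h3⟩ := h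
      exact ⟨b, Set.mem_union_left _ hb, h1, h2, h3⟩
    · exact h.elim
  have hnonemptyCC : ∀ (H : SimpleGraph ((Fin d₂ → Bool) ⊕ (Fin d₂ → Bool))),
      Nonempty H.ConnectedComponent :=
    fun H => ⟨H.connectedComponentMk (Sum.inl fun _ => false)⟩
  have hfinCC : ∀ (H : SimpleGraph ((Fin d₂ → Bool) ⊕ (Fin d₂ → Bool))),
      Finite H.ConnectedComponent := fun H => Quot.finite _
  have hc1 : 1 ≤ Nat.card (JuntaBGraph i k j z A).ConnectedComponent := by
    have := hnonemptyCC (JuntaBGraph i k j z A)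
    have := hfinCC (JuntaBGraph i k j z A)
    exact Nat.card_pos
  have key1 : ∀ a : Fin n → Bool,
      (Nat.card (JuntaBGraph i k j z (A ∪ {a})).ConnectedComponent - 1)
        + auxInd ((∀ t, a (j t) = z t) ∧
            ¬ (JuntaBGraph i k j z A).Reachable
              (Sum.inl fun t => a (i t)) (Sum.inr fun t => a (k t)))
        ≤ Nat.card (JuntaBGraph i k j z A).ConnectedComponent - 1 := by
    intro a
    have hle := aux_card_cc_le (hmono a)
    by_cases hM : (∀ t, a (j t) = z t) ∧
        ¬ (JuntaBGraph i k j z A).Reachable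
          (Sum.inl fun t => a (i t)) (Sum.inr fun t => a (k t))
    · have hz := hM.1
      have hnr := hM.2
      have hadj : (JuntaBGraph i k j z (A ∪ {a})).Adj
          (Sum.inl fun t => a (i t)) (Sum.inr fun t => a (k t)) :=
        ⟨a, Set.mem_union_right _ rfl, fun t => rfl, fun t => rfl, hz⟩
      have hmerge := aux_card_cc_merge (hmono a) hnr hadj.reachable
      have hpos : 1 ≤ Nat.card (JuntaBGraph i k j z (A ∪ {a})).ConnectedComponent := by
        have := hnonemptyCC (JuntaBGraph i k j z (A ∪ {a}))
        have := hfinCC (JuntaBGraph i k j z (A ∪ {a}))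
        exact Nat.card_pos
      rw [auxInd_pos hM]
      omega
    · rw [auxInd_neg hM]
      omega
  have key2 := aux_key2 hd hn i k j z (JuntaBGraph i k j z A) he
  have hsum : (∑ a : Fin n → Bool,
        (Nat.card (JuntaBGraph i k j z (A ∪ {a})).ConnectedComponent - 1))
      + (∑ a : Fin n → Bool,
          auxInd ((∀ t, a (j t) = z t) ∧
            ¬ (JuntaBGraph i k j z A).Reachable
              (Sum.inl fun t => a (i t)) (Sum.inr fun t => a (k t))))
      ≤ 2 ^ n * (Nat.card (JuntaBGraph i k j z A).ConnectedComponent - 1) := by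
    rw [← Finset.sum_add_distrib]
    calc ∑ a : Fin n → Bool,
          ((Nat.card (JuntaBGraph i k j z (A ∪ {a})).ConnectedComponent - 1)
            + auxInd ((∀ t, a (j t) = z t) ∧
                ¬ (JuntaBGraph i k j z A).Reachable
                  (Sum.inl fun t => a (i t)) (Sum.inr fun t => a (k t))))
        ≤ ∑ _a : Fin n → Bool,
            (Nat.card (JuntaBGraph i k j z A).ConnectedComponent - 1) :=
          Finset.sum_le_sum fun a _ => key1 a
      _ = 2 ^ n * (Nat.card (JuntaBGraph i k j z A).ConnectedComponent - 1) := by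
          rw [Finset.sum_const, smul_eq_mul, Finset.card_univ]
          congr 1
          simp
  set X := ∑ a : Fin n → Bool,
    (Nat.card (JuntaBGraph i k j z (A ∪ {a})).ConnectedComponent - 1) with hX
  set Mc := ∑ a : Fin n → Bool,
    auxInd ((∀ t, a (j t) = z t) ∧
      ¬ (JuntaBGraph i k j z A).Reachable
        (Sum.inl fun t => a (i t)) (Sum.inr fun t => a (k t))) with hMc
  set B := 2 ^ n * (Nat.card (JuntaBGraph i k j z A).ConnectedComponent - 1) with hB
  set R := 2 ^ (d+1) with hR
  clear_value X Mc B R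
  have hR1 : 1 ≤ R := by rw [hR]; exact Nat.one_le_two_pow
  clear hX hMc hB hR key1
  have h5 : R * X + R * Mc ≤ R * B := by
    rw [← Nat.mul_add]
    exact Nat.mul_le_mul_left R hsum
  have h6 : (R - 1) * B + B = R * B := by
    have h7 : R - 1 + 1 = R := by omega
    calc (R - 1) * B + B = (R - 1 + 1) * B := by ring
      _ = R * B := by rw [h7]
  have h8 : B ≤ R * Mc := key2
  generalize hA1 : R * X = P1 at *
  generalize hA2 : R * Mc = P2 at *
  generalize hA3 : R * B = P3 at *
  generalize hA4 : (R - 1) * B = P4 at *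
  omega

/-- Let `d ≥ 1` and `n ≥ 2d`.  For every finite `A ⊆ {0,1}ⁿ` there is
an assignment `a ∈ {0,1}ⁿ` with `X(A ∪ {a}) ≤ X(A)·(1 − 1/2^{d+1})`. -/
theorem stmt_16 (n d : ℕ) (hd : 1 ≤ d) (hn : 2 * d ≤ n)
    (A : Set (Fin n → Bool)) (hA : A.Finite) :
    ∃ a : Fin n → Bool,
      (XA n d (A ∪ {a}) : ℝ) ≤ (XA n d A : ℝ) * (1 - 1 / 2 ^ (d + 1)) := by
  classical
  have main : 2 ^ (d+1) * ∑ a : Fin n → Bool, XA n d (A ∪ {a})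
      ≤ (2 ^ (d+1) - 1) * (2 ^ n * XA n d A) := by
    have swap : ∑ a : Fin n → Bool, XA n d (A ∪ {a}) =
        ∑ p ∈ Finset.HasAntidiagonal.antidiagonal d, ∑ i : Fin p.2 → Fin n, ∑ k : Fin p.2 → Fin n,
          ∑ j : Fin p.1 → Fin n, ∑ z : Fin p.1 → Bool,
            ∑ a : Fin n → Bool,
              if Function.Injective (Sum.elim (Sum.elim i k) j) then
                Nat.card (JuntaBGraph i k j z (A ∪ {a})).ConnectedComponent - 1
              else 0 := by
      simp only [XA]
      rw [Finset.sum_comm]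
      refine Finset.sum_congr rfl fun p _ => ?_
      rw [Finset.sum_comm]
      refine Finset.sum_congr rfl fun i _ => ?_
      rw [Finset.sum_comm]
      refine Finset.sum_congr rfl fun k _ => ?_
      rw [Finset.sum_comm]
      refine Finset.sum_congr rfl fun j _ => ?_
      rw [Finset.sum_comm]
    rw [swap]
    simp only [XA, Finset.mul_sum]
    refine Finset.sum_le_sum fun p hp => ?_
    refine Finset.sum_le_sum fun i _ => ?_
    refine Finset.sum_le_sum fun k _ => ?_
    refine Finset.sum_le_sum fun j _ => ?_
    refine Finset.sum_le_sum fun z _ => ?_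
    by_cases hinj : Function.Injective (Sum.elim (Sum.elim i k) j)
    · simp only [if_pos hinj]
      have hpd : p.1 + p.2 = d := Finset.HasAntidiagonal.mem_antidiagonal.mp hp
      rw [← Finset.mul_sum]
      exact aux_perterm hpd hn i k j z A hinj
    · simp only [if_neg hinj]
      simp
  -- move to the reals
  have hpow : (0:ℝ) < 2 ^ (d+1) := by positivity
  have main' : (2:ℝ) ^ (d+1) * ∑ a : Fin n → Bool, (XA n d (A ∪ {a}) : ℝ)
      ≤ ((2:ℝ) ^ (d+1) - 1) * (2 ^ n * XA n d A) := by
    have h := (Nat.cast_le (α := ℝ)).mpr main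
    rw [Nat.cast_mul, Nat.cast_mul, Nat.cast_mul, Nat.cast_sum] at h
    rw [Nat.cast_sub Nat.one_le_two_pow] at h
    push_cast at h ⊢
    convert h using 2
  have hsum : ∑ a : Fin n → Bool, (XA n d (A ∪ {a}) : ℝ)
      ≤ ∑ _a : Fin n → Bool, (XA n d A : ℝ) * (1 - 1 / 2 ^ (d + 1)) := by
    rw [Finset.sum_const, Finset.card_univ]
    have hcard : (Fintype.card (Fin n → Bool) : ℝ) = 2 ^ n := by
      simp
    rw [nsmul_eq_mul, hcard]
    have expand : ((2:ℝ) ^ (d+1) - 1) * (2 ^ n * XA n d A)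
        = 2 ^ (d+1) * (2 ^ n * ((XA n d A : ℝ) * (1 - 1 / 2 ^ (d + 1)))) := by
      field_simp
    have := main'.trans_eq expand
    exact le_of_mul_le_mul_left this hpow
  obtain ⟨a, _, ha⟩ := Finset.exists_le_of_sum_le Finset.univ_nonempty hsum
  exact ⟨a, ha⟩
end

section
/- Let d ≥ 1 be an integer and n > 2d. Let F be the class of functions {0,1}ⁿ → {0,1} of the form f_{ξ,i}(x) = x₁^{ξ₁} ∧ ⋯ ∧ x_{d−1}^{ξ_{d−1}} ∧ x_i, where ξ = (ξ₁,…,ξ_{d−1}) ∈ {0,1}^{d−1} and d ≤ i ≤ n (so |F| = 2^{d−1}(n−d+1)). Let A ⊆ {0,1}ⁿ be a finite set of assignments and let g be any function mapping each restriction (A → {0,1}) to a function {0,1}ⁿ → {0,1}. If g(f restricted to A) = f holds for at least half of the functions f ∈ F, then |A| ≥ 2^{d−1}·(log₂(n−d+1) − 3)/4. -/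
set_option maxHeartbeats 1600000 in
theorem stmt_17_aux (n d : ℕ) (hd : 1 ≤ d) (hn : 2 * d < n) (hdn : d - 1 ≤ n)
    (F : Finset ((Fin n → Bool) → Bool))
    (hF : F = Finset.image
      (fun p : (Fin (d - 1) → Bool) × Fin n =>
        fun a : Fin n → Bool =>
          (decide (∀ t : Fin (d - 1), a (Fin.castLE hdn t) = p.1 t)) && a p.2)
      ((Finset.univ : Finset (Fin (d - 1) → Bool)) ×ˢ
        (Finset.univ.filter fun i : Fin n => d - 1 ≤ i.val)))
    (A : Finset (Fin n → Bool))
    (g : (↥A → Bool) → ((Fin n → Bool) → Bool))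
    (hg : F.card ≤ 2 * (F.filter fun f => g (fun a => f ↑a) = f).card) :
    (2 : ℝ) ^ (d - 1) * (Real.logb 2 ((n : ℝ) - d + 1) - 3) / 4 ≤ (A.card : ℝ) := by
  classical
  have hdlt : d - 1 < n := by clear hg; omega
  have hdle : d ≤ n := by clear hg; omega
  have he1 : n - (d - 1) = n - d + 1 := by clear hg; omega
  set fF : (Fin (d - 1) → Bool) × Fin n → ((Fin n → Bool) → Bool) :=
    fun p => fun a : Fin n → Bool =>
      (decide (∀ t : Fin (d - 1), a (Fin.castLE hdn t) = p.1 t)) && a p.2 with hfF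
  set idx : Finset (Fin n) := Finset.univ.filter (fun i : Fin n => d - 1 ≤ i.val) with hidx
  set P := ((Finset.univ : Finset (Fin (d - 1) → Bool)) ×ˢ idx) with hP
  have hFim : F = P.image fF := hF
  have hmemP : ∀ p : (Fin (d - 1) → Bool) × Fin n, p ∈ P ↔ d - 1 ≤ p.2.val := by
    intro p
    simp [hP, hidx, Finset.mem_product]
  -- injectivity of fF on P
  have hiP : ∀ p ∈ P, ∀ q ∈ P, fF p = fF q → p = q := by
    rintro ⟨ξ, i⟩ hp ⟨ζ, j⟩ hq h
    rw [hmemP] at hp hq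
    simp only at hp hq
    have hξζ : ξ = ζ := by
      by_contra hne
      obtain ⟨t, ht⟩ : ∃ t, ξ t ≠ ζ t := by
        by_contra hall
        push_neg at hall
        exact hne (funext hall)
      set a1 : Fin n → Bool := fun l => if h : (l : ℕ) < d - 1 then ξ ⟨l, h⟩ else true with ha1
      have hval : ∀ (η : Fin (d - 1) → Bool) t, a1 (Fin.castLE hdn t) = η t ↔ ξ t = η t := by
        intro η t
        have hlt : ((Fin.castLE hdn t : Fin n) : ℕ) < d - 1 := t.isLt
        simp only [ha1, dif_pos hlt]
        constructor <;> intro hh <;> simpa using hh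
      have h1 : fF (ξ, i) a1 = true := by
        simp only [hfF]
        rw [Bool.and_eq_true]
        constructor
        · rw [decide_eq_true_eq]
          intro t; exact (hval ξ t).mpr rfl
        · simp only [ha1]
          rw [dif_neg (not_lt.mpr hp)]
      have h2 : fF (ζ, j) a1 = false := by
        simp only [hfF]
        have hnall : ¬ (∀ t : Fin (d - 1), a1 (Fin.castLE hdn t) = ζ t) := by
          intro hall
          exact ht ((hval ζ t).mp (hall t))
        simp [hnall]
      rw [h] at h1
      rw [h1] at h2
      exact Bool.noConfusion h2
    subst hξζ
    have hij : i = j := by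
      by_contra hne
      set a2 : Fin n → Bool := fun l => if h : (l : ℕ) < d - 1 then ξ ⟨l, h⟩ else decide (l = i)
        with ha2
      have hdec : ∀ t : Fin (d - 1), a2 (Fin.castLE hdn t) = ξ t := by
        intro t
        have hlt : ((Fin.castLE hdn t : Fin n) : ℕ) < d - 1 := t.isLt
        simp only [ha2, dif_pos hlt]
        congr 1
      have h1 : fF (ξ, i) a2 = true := by
        simp only [hfF]
        rw [Bool.and_eq_true]
        refine ⟨by rw [decide_eq_true_eq]; exact hdec, ?_⟩
        simp only [ha2]
        rw [dif_neg (not_lt.mpr hp)]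
        simp
      have h2 : fF (ξ, j) a2 = false := by
        simp only [hfF]
        have ha2j : a2 j = false := by
          simp only [ha2]
          rw [dif_neg (not_lt.mpr hq)]
          simp only [decide_eq_false_iff_not]
          intro hh; exact hne hh.symm
        simp [ha2j]
      rw [h] at h1
      rw [h1] at h2
      exact Bool.noConfusion h2
    rw [hij]
  -- cardinality of F
  have hidxcard : idx.card = n - (d - 1) := by
    have : idx = Finset.Ici (⟨d - 1, hdlt⟩ : Fin n) := by
      ext i
      simp [hidx, Finset.mem_Ici, Fin.le_def]
    rw [this, Fin.card_Ici]
  have hPcard : P.card = 2 ^ (d - 1) * (n - (d - 1)) := by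
    rw [hP, Finset.card_product, hidxcard, Finset.card_univ]
    simp [Fintype.card_fun]
  have hFcard : F.card = 2 ^ (d - 1) * (n - (d - 1)) := by
    rw [hFim, Finset.card_image_of_injOn hiP, hPcard]
  -- the correctly-recovered index set
  set Q : (Fin (d - 1) → Bool) × Fin n → Prop :=
    fun p => g (fun a => fF p ↑a) = fF p with hQ
  have hCQ : (F.filter fun f => g (fun a => f ↑a) = f) = (P.filter Q).image fF := by
    rw [hFim, Finset.filter_image]
  have hCcard : (F.filter fun f => g (fun a => f ↑a) = f).card = (P.filter Q).card := by
    rw [hCQ]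
    exact Finset.card_image_of_injOn fun p hp q hq =>
      hiP p (Finset.mem_of_mem_filter p hp) q (Finset.mem_of_mem_filter q hq)
  -- fibers over ξ
  set Aξ : (Fin (d - 1) → Bool) → Finset (Fin n → Bool) :=
    fun ξ => A.filter (fun a => ∀ t : Fin (d - 1), a (Fin.castLE hdn t) = ξ t) with hAξ
  have hAsum : A.card = ∑ ξ : Fin (d - 1) → Bool, (Aξ ξ).card := by
    rw [Finset.card_eq_sum_card_fiberwise
      (f := fun a : Fin n → Bool => fun t : Fin (d - 1) => a (Fin.castLE hdn t))
      (t := Finset.univ) (fun _ _ => Finset.mem_univ _)]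
    refine Finset.sum_congr rfl fun ξ _ => ?_
    congr 1
    simp only [hAξ]
    apply Finset.filter_congr
    intro a _
    simp [funext_iff]
  set fib : (Fin (d - 1) → Bool) → Finset ((Fin (d - 1) → Bool) × Fin n) :=
    fun ξ => (P.filter Q).filter (fun p => p.1 = ξ) with hfib
  have hfibsum : (P.filter Q).card = ∑ ξ : Fin (d - 1) → Bool, (fib ξ).card :=
    Finset.card_eq_sum_card_fiberwise (f := Prod.fst) (t := Finset.univ)
      (fun _ _ => Finset.mem_univ _)
  -- fiber bounds
  have hfib_le_m : ∀ ξ, (fib ξ).card ≤ n - (d - 1) := by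
    intro ξ
    rw [← hidxcard]
    apply Finset.card_le_card_of_injOn (fun p => p.2)
    · intro p hp
      have hp' : p ∈ P := Finset.mem_of_mem_filter p (Finset.mem_of_mem_filter p hp)
      rw [hmemP] at hp'
      rw [hidx, Finset.mem_coe, Finset.mem_filter]
      exact ⟨Finset.mem_univ _, hp'⟩
    · intro p hp q hq hpq
      have h1 : p.1 = ξ := (Finset.mem_filter.mp hp).2
      have h2 : q.1 = ξ := (Finset.mem_filter.mp hq).2
      exact Prod.ext (h1.trans h2.symm) hpq
  have hfib_le_pow : ∀ ξ, (fib ξ).card ≤ 2 ^ (Aξ ξ).card := by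
    intro ξ
    have hinj : Set.InjOn (fun p => (fun a : ↥(Aξ ξ) => fF p ↑a)) (fib ξ) := by
      intro p hp q hq hpq
      obtain ⟨hp', hp1⟩ := Finset.mem_filter.mp hp
      obtain ⟨hpP, hpQ⟩ := Finset.mem_filter.mp hp'
      obtain ⟨hq', hq1⟩ := Finset.mem_filter.mp hq
      obtain ⟨hqP, hqQ⟩ := Finset.mem_filter.mp hq'
      have hrest : (fun a : ↥A => fF p ↑a) = (fun a : ↥A => fF q ↑a) := by
        funext a
        by_cases hmatch : ∀ t : Fin (d - 1), (a : Fin n → Bool) (Fin.castLE hdn t) = ξ t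
        · have hmem : (a : Fin n → Bool) ∈ Aξ ξ := by
            simp only [hAξ, Finset.mem_filter]
            exact ⟨a.2, hmatch⟩
          exact congrFun hpq (⟨(a : Fin n → Bool), hmem⟩ : ↥(Aξ ξ))
        · have hzp : fF p ↑a = false := by
            simp only [hfF]
            have hnp : ¬ ∀ t : Fin (d - 1), (a : Fin n → Bool) (Fin.castLE hdn t) = p.1 t := by
              rw [hp1]; exact hmatch
            simp [hnp]
          have hzq : fF q ↑a = false := by
            simp only [hfF]
            have hnq : ¬ ∀ t : Fin (d - 1), (a : Fin n → Bool) (Fin.castLE hdn t) = q.1 t := by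
              rw [hq1]; exact hmatch
            simp [hnq]
          rw [hzp, hzq]
      have heq : fF p = fF q := by
          simp only [hQ] at hpQ hqQ
          rw [← hpQ, ← hqQ, hrest]
      exact hiP p hpP q hqP heq
    calc (fib ξ).card ≤ (Finset.univ : Finset (↥(Aξ ξ) → Bool)).card :=
          Finset.card_le_card_of_injOn _ (fun _ _ => Finset.mem_univ _) hinj
      _ = 2 ^ (Aξ ξ).card := by
          rw [Finset.card_univ, Fintype.card_fun]
          simp
  -- forget definitions to keep the real part fast
  have hC2 : F.card ≤ 2 * ∑ ξ : Fin (d - 1) → Bool, (fib ξ).card := by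
    rw [← hfibsum, ← hCcard]; exact hg
  clear hg hCcard hfibsum hCQ hmemP hiP hF hFim hidx hidxcard hPcard hfF hQ hAξ hfib hP
  clear_value fib Aξ
  clear Q P idx fF
  -- now the real-number part
  set M : ℝ := (n : ℝ) - d + 1 with hM
  have hMpos : (0 : ℝ) < M := by
    rw [hM]
    have h1 : (2 * d : ℝ) < n := by exact_mod_cast hn
    have h2 : (1 : ℝ) ≤ d := by exact_mod_cast hd
    linarith
  have h23 : (2 : ℝ) ^ (3 : ℝ) = 8 := by
    rw [show (3 : ℝ) = ((3 : ℕ) : ℝ) by norm_num, Real.rpow_natCast]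
    norm_num
  have h22 : (2 : ℝ) ^ (2 : ℝ) = 4 := by
    rw [show (2 : ℝ) = ((2 : ℕ) : ℝ) by norm_num, Real.rpow_natCast]
    norm_num
  set L : ℝ := Real.logb 2 M with hL
  clear_value M
  clear_value L
  by_cases hM8 : M ≤ 8
  · -- trivial case: bound is nonpositive
    have hL3 : L ≤ 3 := by
      rw [hL]
      rw [Real.logb_le_iff_le_rpow (by norm_num) hMpos, h23]
      exact hM8
    have hnonpos : (2 : ℝ) ^ (d - 1) * (L - 3) / 4 ≤ 0 := by
      apply div_nonpos_of_nonpos_of_nonneg _ (by norm_num)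
      apply mul_nonpos_of_nonneg_of_nonpos (by positivity)
      linarith
    calc (2 : ℝ) ^ (d - 1) * (L - 3) / 4 ≤ 0 := hnonpos
      _ ≤ (A.card : ℝ) := Nat.cast_nonneg _
  · push_neg at hM8
    have hL3 : 3 < L := by
      rw [hL]
      rw [Real.lt_logb_iff_rpow_lt (by norm_num) hMpos, h23]
      exact hM8
    have hL2 : (0 : ℝ) < L - 2 := by linarith
    have hmM : ((n - (d - 1) : ℕ) : ℝ) = M := by
      rw [he1, hM, Nat.cast_add, Nat.cast_sub hdle]
      norm_num
    -- per-fiber real bound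
    have hkey : ∀ ξ : Fin (d - 1) → Bool,
        ((fib ξ).card : ℝ) ≤ M / 4 + ((Aξ ξ).card : ℝ) * M / (L - 2) := by
      intro ξ
      by_cases hsmall : ((Aξ ξ).card : ℝ) ≤ L - 2
      · have h1 : ((fib ξ).card : ℝ) ≤ (2 : ℝ) ^ ((Aξ ξ).card) := by
          exact_mod_cast Nat.cast_le.mpr (hfib_le_pow ξ)
        have h2 : (2 : ℝ) ^ ((Aξ ξ).card) ≤ M / 4 := by
          have e1 : (2 : ℝ) ^ ((Aξ ξ).card) = (2 : ℝ) ^ (((Aξ ξ).card : ℝ)) := by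
            rw [Real.rpow_natCast]
          rw [e1]
          calc (2 : ℝ) ^ (((Aξ ξ).card : ℝ)) ≤ (2 : ℝ) ^ (L - 2) :=
                Real.rpow_le_rpow_of_exponent_le (by norm_num) hsmall
            _ = (2 : ℝ) ^ L / (2 : ℝ) ^ (2 : ℝ) := by
                rw [← Real.rpow_sub (by norm_num)]
            _ = M / 4 := by
                rw [hL, Real.rpow_logb (by norm_num) (by norm_num) hMpos, h22]
        have h3 : (0 : ℝ) ≤ ((Aξ ξ).card : ℝ) * M / (L - 2) :=
          div_nonneg (mul_nonneg (Nat.cast_nonneg _) hMpos.le) hL2.le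
        linarith
      · push_neg at hsmall
        have h1 : ((fib ξ).card : ℝ) ≤ M := by
          rw [← hmM]
          exact_mod_cast Nat.cast_le.mpr (hfib_le_m ξ)
        have h2 : M ≤ ((Aξ ξ).card : ℝ) * M / (L - 2) := by
          rw [le_div_iff₀ hL2]
          nlinarith [hMpos, le_of_lt hsmall]
        have h3 : (0 : ℝ) ≤ M / 4 := by linarith
        linarith
    -- sum up
    have hsum : (∑ ξ : Fin (d - 1) → Bool, ((fib ξ).card : ℝ)) ≤
        (2 : ℝ) ^ (d - 1) * (M / 4) + (A.card : ℝ) * M / (L - 2) := by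
      calc (∑ ξ : Fin (d - 1) → Bool, ((fib ξ).card : ℝ))
          ≤ ∑ ξ : Fin (d - 1) → Bool, (M / 4 + ((Aξ ξ).card : ℝ) * M / (L - 2)) :=
            Finset.sum_le_sum (fun ξ _ => hkey ξ)
        _ = (2 : ℝ) ^ (d - 1) * (M / 4)
            + (∑ ξ : Fin (d - 1) → Bool, ((Aξ ξ).card : ℝ)) * M / (L - 2) := by
            rw [Finset.sum_add_distrib]
            congr 1
            · rw [Finset.sum_const, Finset.card_univ, nsmul_eq_mul]
              norm_num [Fintype.card_fun]
            · rw [← Finset.sum_div, ← Finset.sum_mul]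
        _ = (2 : ℝ) ^ (d - 1) * (M / 4) + (A.card : ℝ) * M / (L - 2) := by
            congr 2
            rw [hAsum]
            push_cast
            ring
    have hlower : (2 : ℝ) ^ (d - 1) * M
        ≤ 2 * ∑ ξ : Fin (d - 1) → Bool, ((fib ξ).card : ℝ) := by
      have hgg := hC2
      rw [hFcard] at hgg
      calc (2 : ℝ) ^ (d - 1) * M = ((2 ^ (d - 1) * (n - (d - 1)) : ℕ) : ℝ) := by
            rw [Nat.cast_mul, Nat.cast_pow, hmM]
            norm_num
        _ ≤ ((2 * ∑ ξ : Fin (d - 1) → Bool, (fib ξ).card : ℕ) : ℝ) := Nat.cast_le.mpr hgg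
        _ = 2 * ∑ ξ : Fin (d - 1) → Bool, ((fib ξ).card : ℝ) := by
            push_cast
            ring
    have hfinal : (2 : ℝ) ^ (d - 1) * (L - 2) / 4 ≤ (A.card : ℝ) := by
      have hstep : (2 : ℝ) ^ (d - 1) * (M / 4) ≤ (A.card : ℝ) * M / (L - 2) := by
        nlinarith [hsum, hlower]
      rw [le_div_iff₀ hL2] at hstep
      have hM' : (2 : ℝ) ^ (d - 1) * (L - 2) / 4 * M ≤ (A.card : ℝ) * M := by
        nlinarith [hstep, hMpos, hL2]
      exact le_of_mul_le_mul_right hM' hMpos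
    nlinarith [hfinal, pow_nonneg (by norm_num : (0:ℝ) ≤ 2) (d - 1), hL3]

/-- Let `d ≥ 1`, `n > 2d`, and let `F` be the class of functions
`f_{ξ,i}(x) = x₁^{ξ₁} ∧ ⋯ ∧ x_{d−1}^{ξ_{d−1}} ∧ x_i` for `ξ ∈ {0,1}^{d−1}` and
`d ≤ i ≤ n` (coordinates are 0-indexed below, so `x₁,…,x_{d−1}` are coordinates
`0,…,d−2` and `i` ranges over the indices with `i ≥ d−1`).  Let `A ⊆ {0,1}ⁿ` be a set
of queries and `g` any map taking restrictions `A → {0,1}` to functions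
`{0,1}ⁿ → {0,1}`.  If `g(f|_A) = f` for at least half of `f ∈ F`, then
`|A| ≥ 2^{d−1}·(log₂(n−d+1) − 3)/4`. -/
theorem stmt_17 (n d : ℕ) (hd : 1 ≤ d) (hn : 2 * d < n)
    (F : Finset ((Fin n → Bool) → Bool))
    (hF : F = Finset.image
      (fun p : (Fin (d - 1) → Bool) × Fin n =>
        fun a : Fin n → Bool =>
          (decide (∀ t : Fin (d - 1), a (Fin.castLE (by omega) t) = p.1 t)) && a p.2)
      ((Finset.univ : Finset (Fin (d - 1) → Bool)) ×ˢ
        (Finset.univ.filter fun i : Fin n => d - 1 ≤ i.val)))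
    (A : Finset (Fin n → Bool))
    (g : (↥A → Bool) → ((Fin n → Bool) → Bool))
    (hg : F.card ≤ 2 * (F.filter fun f => g (fun a => f ↑a) = f).card) :
    (2 : ℝ) ^ (d - 1) * (Real.logb 2 ((n : ℝ) - d + 1) - 3) / 4 ≤ (A.card : ℝ) := by
  have hdn : d - 1 ≤ n := by clear hg; omega
  exact stmt_17_aux n d hd hn hdn F hF A g hg
end
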